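/- arXiv:0907.1562 — 7 statements merged into one kernel-verified Lean document; each statement's English description precedes it below -/
import Mathlib

section
/- For every triangle in the plane with area A and perimeter L, one has 12·√3·A ≤ L², with equality if and only if the triangle is equilateral. -/
open MeasureTheory

noncomputable section

abbrev E2 := EuclideanSpace ℝ (Fin 2)


def Tstd : Set E2 := {x | 0 ≤ x 0 ∧ 0 ≤ x 1 ∧ x 0 + x 1 ≤ 1}

lemma cont0 : Continuous (fun x : E2 => x 0) := by fun_prop
lemma cont1 : Continuous (fun x : E2 => x 1) := by fun_prop

lemma Tstd_closed : IsClosed Tstd :=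
  (isClosed_le continuous_const cont0).inter ((isClosed_le continuous_const cont1).inter
    (isClosed_le (cont0.add cont1) continuous_const))

lemma line_null : volume {x : E2 | x 0 + x 1 = 1} = 0 := by
  classical
  set f : E2 →ₗ[ℝ] ℝ :=
    { toFun := fun x => x 0 + x 1
      map_add' := by intro x y; simp [PiLp.add_apply]; ring
      map_smul' := by intro c x; simp [PiLp.smul_apply, smul_eq_mul]; ring }
  set p : E2 := EuclideanSpace.single 0 (1:ℝ)
  have hp : f p = 1 := by simp [f, p, EuclideanSpace.single_apply]
  have hset : {x : E2 | x 0 + x 1 = 1} = (AffineSubspace.mk' p (LinearMap.ker f) : Set E2) := by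
    ext x
    simp only [Set.mem_setOf_eq, SetLike.mem_coe, AffineSubspace.mem_mk',
      LinearMap.mem_ker, vsub_eq_sub, map_sub, hp]
    constructor
    · intro h; simp [f]; linarith [h]
    · intro h; simp [f] at h; linarith [h]
  rw [hset]
  apply Measure.addHaar_affineSubspace
  intro htop
  have h0 : (0 : E2) ∈ AffineSubspace.mk' p (LinearMap.ker f) := htop ▸ AffineSubspace.mem_top ℝ E2 0
  rw [AffineSubspace.mem_mk'] at h0
  simp only [vsub_eq_sub, LinearMap.mem_ker, map_sub, map_zero, hp] at h0
  norm_num at h0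

lemma Tstd_volume : volume Tstd = ENNReal.ofReal (1/2) := by
  classical
  set Q : Set E2 := {x | ∀ i, x i ∈ Set.Icc (0:ℝ) 1} with hQdef
  have hQvol : volume Q = 1 := by
    have := (EuclideanSpace.volume_preserving_symm_measurableEquiv_toLp (Fin 2)).measure_preimage
      (s := Set.univ.pi fun _ : Fin 2 => Set.Icc (0:ℝ) 1)
      (MeasurableSet.univ_pi (fun _ => measurableSet_Icc)).nullMeasurableSet
    have hpre : (MeasurableEquiv.toLp 2 (Fin 2 → ℝ)).symm ⁻¹'
        (Set.univ.pi fun _ : Fin 2 => Set.Icc (0:ℝ) 1) = Q := by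
      ext x
      simp [Set.mem_pi, Q, Pi.le_def, forall_and]
    rw [hpre] at this
    rw [this, volume_pi_pi]
    simp [Real.volume_Icc]
  have hTQ : Tstd ⊆ Q := by
    rintro x ⟨h0, h1, hs⟩ i
    fin_cases i <;> constructor <;> simp <;> linarith
  set c : E2 := WithLp.toLp 2 (fun _ => (1:ℝ) : Fin 2 → ℝ) with hc
  set T' : Set E2 := {x | x 0 ≤ 1 ∧ x 1 ≤ 1 ∧ 1 ≤ x 0 + x 1} with hT'
  have hT'meas : MeasurableSet T' :=
    ((isClosed_le cont0 continuous_const).inter ((isClosed_le cont1 continuous_const).inter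
      (isClosed_le continuous_const (cont0.add cont1)))).measurableSet
  have hT'vol : volume T' = volume Tstd := by
    have himg : T' = Neg.neg ⁻¹' ((fun y => c + y) ⁻¹' Tstd) := by
      ext x
      simp only [Set.mem_preimage, Set.mem_setOf_eq, Tstd, T', PiLp.add_apply, PiLp.neg_apply]
      constructor
      · rintro ⟨a, b, s⟩
        refine ⟨by show (0:ℝ) ≤ 1 + -x 0; linarith, by show (0:ℝ) ≤ 1 + -x 1; linarith,
          by show (1:ℝ) + -x 0 + (1 + -x 1) ≤ 1; linarith⟩
      · rintro ⟨a, b, s⟩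
        replace a : (0:ℝ) ≤ 1 + -x 0 := a
        replace b : (0:ℝ) ≤ 1 + -x 1 := b
        replace s : (1:ℝ) + -x 0 + (1 + -x 1) ≤ 1 := s
        exact ⟨by linarith, by linarith, by linarith⟩
    rw [himg, Measure.measure_preimage_neg, measure_preimage_add]
  have hunion : Tstd ∪ T' = Q := by
    ext x
    constructor
    · rintro (h | h)
      · exact hTQ h
      · intro i; obtain ⟨a, b, s⟩ := h; fin_cases i <;> constructor <;> simp <;> linarith
    · intro h
      have h0 := h 0; have h1 := h 1
      rcases le_total (x 0 + x 1) 1 with hle | hle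
      · exact Or.inl ⟨h0.1, h1.1, hle⟩
      · exact Or.inr ⟨h0.2, h1.2, hle⟩
  have hinter : volume (Tstd ∩ T') = 0 := by
    refine measure_mono_null ?_ line_null
    rintro x ⟨⟨_, _, hs1⟩, _, _, hs2⟩
    exact le_antisymm hs1 hs2
  have hkey := measure_union_add_inter (μ := volume) (t := T') Tstd hT'meas
  rw [hunion, hQvol, hinter, hT'vol, add_zero] at hkey
  have hfin : volume Tstd ≠ ⊤ := by
    intro h
    have := measure_mono (μ := volume) hTQ
    rw [h, hQvol] at this
    exact absurd this (by simp)
  have h2 : (2:ENNReal) * volume Tstd = 1 := by rw [two_mul, hkey]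
  have : volume Tstd = 2⁻¹ := by
    rw [show (2:ENNReal)⁻¹ = 2⁻¹ * 1 from (mul_one _).symm, ← h2, ← mul_assoc,
      ENNReal.inv_mul_cancel (by norm_num) (by norm_num), one_mul]
  rw [this]
  rw [ENNReal.ofReal_div_of_pos] <;> norm_num


def e₀ : E2 := EuclideanSpace.single 0 1
def e₁ : E2 := EuclideanSpace.single 1 1

lemma hull_eq_Tstd : convexHull ℝ ({0, e₀, e₁} : Set E2) = Tstd := by
  apply Set.Subset.antisymm
  · apply convexHull_min
    · rintro x (rfl | rfl | rfl)
      · exact ⟨le_refl 0, le_refl 0, by norm_num⟩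
      · refine ⟨?_, ?_, ?_⟩ <;> simp [e₀, EuclideanSpace.single_apply]
      · refine ⟨?_, ?_, ?_⟩ <;> simp [e₁, EuclideanSpace.single_apply]
    · rintro x ⟨hx0, hx1, hxs⟩ y ⟨hy0, hy1, hys⟩ a b ha hb hab
      refine ⟨?_, ?_, ?_⟩ <;>
        simp only [PiLp.add_apply, PiLp.smul_apply, smul_eq_mul] <;> nlinarith
  · rintro x ⟨hx0, hx1, hxs⟩
    rw [show ({0, e₀, e₁} : Set E2) = insert 0 {e₀, e₁} from rfl,
      convexHull_insert ⟨e₀, by simp⟩, convexHull_pair]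
    rcases eq_or_lt_of_le (by linarith : (0:ℝ) ≤ x 0 + x 1) with hs | hs
    · have hx00 : x 0 = 0 := by linarith
      have hx10 : x 1 = 0 := by linarith
      have hx : x = 0 := by
        ext i; fin_cases i
        · exact hx00
        · exact hx10
      rw [hx]
      exact mem_convexJoin.2 ⟨0, rfl, e₀, left_mem_segment ℝ e₀ e₁, left_mem_segment ℝ 0 e₀⟩
    · set s := x 0 + x 1 with hsdef
      set z : E2 := (x 0 / s) • e₀ + (x 1 / s) • e₁ with hz
      have hzseg : z ∈ segment ℝ e₀ e₁ :=
        ⟨x 0 / s, x 1 / s, by positivity, by positivity, by field_simp; exact hsdef.symm, rfl⟩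
      have hxseg : x ∈ segment ℝ (0:E2) z := by
        refine ⟨1 - s, s, by linarith, le_of_lt hs, by ring, ?_⟩
        ext i
        simp only [hz, PiLp.add_apply, PiLp.smul_apply, smul_eq_mul, smul_zero, zero_add,
          PiLp.zero_apply]
        fin_cases i <;>
          simp [e₀, e₁, EuclideanSpace.single_apply] <;> field_simp
      exact mem_convexJoin.2 ⟨0, rfl, z, hzseg, hxseg⟩

lemma triangle_volume (P₁ P₂ P₃ : E2) :
    volume (convexHull ℝ ({P₁, P₂, P₃} : Set E2)) =
      ENNReal.ofReal (|(P₂ 0 - P₁ 0) * (P₃ 1 - P₁ 1) - (P₂ 1 - P₁ 1) * (P₃ 0 - P₁ 0)| / 2) := by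
  classical
  set v : E2 := P₂ - P₁ with hv
  set w : E2 := P₃ - P₁ with hw
  set b : Module.Basis (Fin 2) ℝ E2 := (EuclideanSpace.basisFun (Fin 2) ℝ).toBasis with hb
  set M : Matrix (Fin 2) (Fin 2) ℝ := !![v 0, w 0; v 1, w 1] with hM
  set f : E2 →ₗ[ℝ] E2 := Matrix.toLin b b M with hf
  have hb0 : b 0 = e₀ := by
    simp only [hb, e₀, OrthonormalBasis.coe_toBasis, EuclideanSpace.basisFun_apply]
  have hb1 : b 1 = e₁ := by
    simp only [hb, e₁, OrthonormalBasis.coe_toBasis, EuclideanSpace.basisFun_apply]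
  have hfe0 : f e₀ = v := by
    rw [← hb0, hf, Matrix.toLin_self]
    ext i
    simp only [Fin.sum_univ_two, hM, Matrix.cons_val', Matrix.cons_val_zero, Matrix.cons_val_one,
      Matrix.head_cons, Matrix.empty_val', Matrix.cons_val_fin_one, Matrix.head_fin_const,
      PiLp.add_apply, PiLp.smul_apply, smul_eq_mul, hb0, hb1]
    fin_cases i <;> simp [e₀, e₁, EuclideanSpace.single_apply]
  have hfe1 : f e₁ = w := by
    rw [← hb1, hf, Matrix.toLin_self]
    ext i
    simp only [Fin.sum_univ_two, hM, Matrix.cons_val', Matrix.cons_val_zero, Matrix.cons_val_one,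
      Matrix.head_cons, Matrix.empty_val', Matrix.cons_val_fin_one, Matrix.head_fin_const,
      PiLp.add_apply, PiLp.smul_apply, smul_eq_mul, hb0, hb1]
    fin_cases i <;> simp [e₀, e₁, EuclideanSpace.single_apply]
  have hdet : LinearMap.det f = v 0 * w 1 - v 1 * w 0 := by
    rw [hf, LinearMap.det_toLin, hM, Matrix.det_fin_two_of]; ring
  -- image of standard triangle under f then translation
  have himg1 : f '' (convexHull ℝ ({0, e₀, e₁} : Set E2)) = convexHull ℝ ({0, v, w} : Set E2) := by
    have hcoe : ⇑f = ⇑f.toAffineMap := rfl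
    rw [hcoe, f.toAffineMap.image_convexHull]
    congr 1
    simp only [Set.image_insert_eq, Set.image_singleton, LinearMap.coe_toAffineMap, map_zero,
      hfe0, hfe1]
  have himg2 : (fun x => P₁ + x) '' (convexHull ℝ ({0, v, w} : Set E2)) =
      convexHull ℝ ({P₁, P₂, P₃} : Set E2) := by
    have : (fun x => P₁ + x) = ⇑(AffineEquiv.constVAdd ℝ E2 P₁) := by
      funext x; simp [AffineEquiv.constVAdd_apply]
    rw [this, show ⇑(AffineEquiv.constVAdd ℝ E2 P₁) = ⇑(AffineEquiv.constVAdd ℝ E2 P₁).toAffineMap from rfl,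
      (AffineEquiv.constVAdd ℝ E2 P₁).toAffineMap.image_convexHull]
    congr 1
    simp only [Set.image_insert_eq, Set.image_singleton, AffineEquiv.coe_toAffineMap,
      AffineEquiv.constVAdd_apply, vadd_eq_add, add_zero, hv, hw]
    rw [add_sub_cancel, add_sub_cancel]
  calc volume (convexHull ℝ ({P₁, P₂, P₃} : Set E2))
      = volume ((fun x => P₁ + x) '' (f '' (convexHull ℝ ({0, e₀, e₁} : Set E2)))) := by
        rw [himg1, himg2]
    _ = volume (f '' (convexHull ℝ ({0, e₀, e₁} : Set E2))) := by
        rw [Set.image_add_left, measure_preimage_add]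
    _ = ENNReal.ofReal |LinearMap.det f| * volume Tstd := by
        rw [Measure.addHaar_image_linearMap, hull_eq_Tstd]
    _ = ENNReal.ofReal (|(P₂ 0 - P₁ 0) * (P₃ 1 - P₁ 1) - (P₂ 1 - P₁ 1) * (P₃ 0 - P₁ 0)| / 2) := by
        rw [Tstd_volume, hdet, ← ENNReal.ofReal_mul (abs_nonneg _)]
        congr 1
        have hv0 : v 0 = P₂ 0 - P₁ 0 := rfl
        have hv1 : v 1 = P₂ 1 - P₁ 1 := rfl
        have hw0 : w 0 = P₃ 0 - P₁ 0 := rfl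
        have hw1 : w 1 = P₃ 1 - P₁ 1 := rfl
        rw [hv0, hv1, hw0, hw1]
        ring



lemma key_ineq (x y z : ℝ) (hx : 0 < x) (hy : 0 < y) (hz : 0 < z) :
    27 * (x * y * z) ≤ (x + y + z) ^ 3 := by
  nlinarith [mul_nonneg hx.le (sq_nonneg (y - z)), mul_nonneg hy.le (sq_nonneg (x - z)),
    mul_nonneg hz.le (sq_nonneg (x - y)),
    mul_nonneg (by positivity : (0:ℝ) ≤ x + y + z) (sq_nonneg (x - y)),
    mul_nonneg (by positivity : (0:ℝ) ≤ x + y + z) (sq_nonneg (y - z)),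
    mul_nonneg (by positivity : (0:ℝ) ≤ x + y + z) (sq_nonneg (x - z))]

lemma key_eq_aux (u v w : ℝ) (hu : 0 < u) (hv : 0 < v) (hw : 0 < w)
    (huvw : 27 * (u * v * w) = (u + v + w) ^ 3) : u = v := by
  have hsq' : (u - v) ^ 2 ≤ 0 := by
    nlinarith [mul_nonneg hu.le (sq_nonneg (v - w)), mul_nonneg hv.le (sq_nonneg (u - w)),
      mul_nonneg hw.le (sq_nonneg (u - v)),
      mul_nonneg (by positivity : (0:ℝ) ≤ u + v + w) (sq_nonneg (u - v)),
      mul_nonneg (by positivity : (0:ℝ) ≤ u + v + w) (sq_nonneg (v - w)),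
      mul_nonneg (by positivity : (0:ℝ) ≤ u + v + w) (sq_nonneg (u - w))]
  nlinarith [sq_nonneg (u - v)]

lemma alg_lemma (a b c A : ℝ) (ha : 0 ≤ a) (hb : 0 ≤ b) (hc : 0 ≤ c) (hA : 0 < A)
    (h : 16 * A ^ 2 = (a + b + c) * (-a + b + c) * (a - b + c) * (a + b - c)) :
    12 * Real.sqrt 3 * A ≤ (a + b + c) ^ 2 ∧
      (12 * Real.sqrt 3 * A = (a + b + c) ^ 2 ↔ a = b ∧ b = c) := by
  have h3 : Real.sqrt 3 ^ 2 = 3 := Real.sq_sqrt (by norm_num)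
  have h3pos : 0 < Real.sqrt 3 := Real.sqrt_pos.2 (by norm_num)
  obtain ⟨x, hx⟩ : ∃ x : ℝ, x = -a + b + c := ⟨_, rfl⟩
  obtain ⟨y, hy⟩ : ∃ y : ℝ, y = a - b + c := ⟨_, rfl⟩
  obtain ⟨z, hz⟩ : ∃ z : ℝ, z = a + b - c := ⟨_, rfl⟩
  obtain ⟨s, hs⟩ : ∃ s : ℝ, s = a + b + c := ⟨_, rfl⟩
  have hsxyz : s = x + y + z := by rw [hx, hy, hz, hs]; ring
  have hh : 16 * A ^ 2 = s * (x * y * z) := by rw [hx, hy, hz, hs, h]; ring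
  have hprod : 0 < s * (x * y * z) := by rw [← hh]; positivity
  have hs0 : 0 ≤ s := by rw [hs]; positivity
  have hspos : 0 < s := by
    rcases hs0.lt_or_eq with h' | h'
    · exact h'
    · exfalso; rw [← h'] at hprod; simp at hprod
  have hxyz : 0 < x * y * z := by
    by_contra h'
    push_neg at h'
    exact absurd hprod (not_lt.2 (mul_nonpos_iff.2 (Or.inl ⟨hs0, h'⟩)))
  have hxpos : 0 < x := by
    by_contra h'
    push_neg at h'
    have hy' : 0 ≤ y := by rw [hx] at h'; rw [hy]; linarith
    have hz' : 0 ≤ z := by rw [hx] at h'; rw [hz]; linarith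
    nlinarith [mul_nonneg hy' hz']
  have hypos : 0 < y := by
    by_contra h'
    push_neg at h'
    have hz' : 0 ≤ z := by rw [hy] at h'; rw [hz]; linarith
    nlinarith [mul_nonneg hxpos.le hz']
  have hzpos : 0 < z := by
    by_contra h'
    push_neg at h'
    nlinarith [mul_nonneg hxpos.le hypos.le]
  have hamgm : 27 * (x * y * z) ≤ s ^ 3 := hsxyz ▸ key_ineq x y z hxpos hypos hzpos
  have hineq : 12 * Real.sqrt 3 * A ≤ s ^ 2 := by
    have e1 : (12 * Real.sqrt 3 * A) ^ 2 = 432 * A ^ 2 := by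
      rw [mul_pow, mul_pow, h3]; ring
    have hsq : (12 * Real.sqrt 3 * A) ^ 2 ≤ (s ^ 2) ^ 2 := by
      rw [e1]
      nlinarith [mul_le_mul_of_nonneg_left hamgm hs0]
    have h1 : 0 ≤ 12 * Real.sqrt 3 * A := by positivity
    calc 12 * Real.sqrt 3 * A = Real.sqrt ((12 * Real.sqrt 3 * A) ^ 2) := (Real.sqrt_sq h1).symm
      _ ≤ Real.sqrt ((s ^ 2) ^ 2) := Real.sqrt_le_sqrt hsq
      _ = s ^ 2 := Real.sqrt_sq (by positivity)
  rw [← hs]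
  refine ⟨hineq, ?_, ?_⟩
  · intro heq
    have e1 : (12 * Real.sqrt 3 * A) ^ 2 = 432 * A ^ 2 := by
      rw [mul_pow, mul_pow, h3]; ring
    have h2 : 432 * A ^ 2 = (s ^ 2) ^ 2 := by rw [← e1, heq]
    have h27 : 27 * (x * y * z) = s ^ 3 := by
      have hss : s * (27 * (x * y * z)) = s * s ^ 3 := by nlinarith [h2, hh]
      exact mul_left_cancel₀ (ne_of_gt hspos) hss
    rw [hsxyz] at h27
    have h1 := key_eq_aux x y z hxpos hypos hzpos h27
    have h2' := key_eq_aux y z x hypos hzpos hxpos (by linear_combination h27)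
    constructor
    · rw [hx] at h1; rw [hy] at h1; linarith
    · rw [hy] at h2'; rw [hz] at h2'; linarith
  · rintro ⟨rfl, rfl⟩
    have hAval : A = Real.sqrt 3 * a ^ 2 / 4 := by
      have hA2 : A ^ 2 = (Real.sqrt 3 * a ^ 2 / 4) ^ 2 := by
        rw [div_pow, mul_pow, h3]
        linear_combination h / 16
      have h1 : 0 ≤ Real.sqrt 3 * a ^ 2 / 4 := by positivity
      calc A = Real.sqrt (A ^ 2) := (Real.sqrt_sq hA.le).symm
        _ = Real.sqrt ((Real.sqrt 3 * a ^ 2 / 4) ^ 2) := by rw [hA2]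
        _ = Real.sqrt 3 * a ^ 2 / 4 := Real.sqrt_sq h1
    rw [hAval, hs]
    linear_combination (3 * a ^ 2) * h3


lemma dist_sq_coords (x y : E2) :
    dist x y ^ 2 = (x 0 - y 0) ^ 2 + (x 1 - y 1) ^ 2 := by
  rw [EuclideanSpace.dist_eq, Real.sq_sqrt (by positivity)]
  simp [Fin.sum_univ_two, Real.dist_eq, sq_abs]

lemma collinear_of_det_eq_zero (P₁ P₂ P₃ : E2)
    (h : (P₂ 0 - P₁ 0) * (P₃ 1 - P₁ 1) - (P₂ 1 - P₁ 1) * (P₃ 0 - P₁ 0) = 0) :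
    Collinear ℝ ({P₁, P₂, P₃} : Set E2) := by
  set v : E2 := P₂ - P₁ with hv
  set w : E2 := P₃ - P₁ with hw
  have hv0 : v 0 = P₂ 0 - P₁ 0 := rfl
  have hv1 : v 1 = P₂ 1 - P₁ 1 := rfl
  have hw0 : w 0 = P₃ 0 - P₁ 0 := rfl
  have hw1 : w 1 = P₃ 1 - P₁ 1 := rfl
  have hd : v 0 * w 1 - v 1 * w 0 = 0 := by rw [hv0, hv1, hw0, hw1]; linarith [h]
  by_cases hvz : v = 0
  · have hP : P₂ = P₁ := by
      have := sub_eq_zero.1 (hv ▸ hvz)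
      exact this
    rw [hP, Set.insert_comm, Set.insert_idem]
    exact collinear_pair ℝ P₁ P₃
  · -- v ≠ 0, find t with w = t • v
    obtain ⟨t, ht⟩ : ∃ t : ℝ, w = t • v := by
      by_cases hv00 : v 0 = 0
      · have hv10 : v 1 ≠ 0 := by
          intro hv10
          apply hvz
          ext i; fin_cases i
          · exact hv00
          · exact hv10
        refine ⟨w 1 / v 1, ?_⟩
        ext i
        fin_cases i <;> simp only [PiLp.smul_apply, smul_eq_mul]
        · show w 0 = w 1 / v 1 * v 0
          rw [hv00] at hd ⊢
          have h2 : v 1 * w 0 = 0 := by linear_combination -hd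
          rcases mul_eq_zero.1 h2 with h1 | h1
          · exact absurd h1 hv10
          · rw [h1]; ring
        · show w 1 = w 1 / v 1 * v 1
          field_simp
      · refine ⟨w 0 / v 0, ?_⟩
        ext i
        fin_cases i <;> simp only [PiLp.smul_apply, smul_eq_mul]
        · show w 0 = w 0 / v 0 * v 0
          field_simp
        · show w 1 = w 0 / v 0 * v 1
          field_simp
          nlinarith [hd]
    rw [collinear_iff_of_mem (Set.mem_insert P₁ {P₂, P₃})]
    refine ⟨v, ?_⟩
    rintro p (rfl | rfl | rfl)
    · exact ⟨0, by simp⟩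
    · exact ⟨1, by simp [hv]⟩
    · exact ⟨t, by rw [← ht, hw]; simp⟩

/-- For every triangle in the plane with area `A` and perimeter `L`,
`12·√3·A ≤ L²`, with equality iff the triangle is equilateral. -/
theorem stmt_0 (P₁ P₂ P₃ : EuclideanSpace ℝ (Fin 2))
    (hnc : ¬ Collinear ℝ ({P₁, P₂, P₃} : Set (EuclideanSpace ℝ (Fin 2))))
    (l₁ l₂ l₃ L A : ℝ)
    (hl₁ : l₁ = dist P₂ P₃) (hl₂ : l₂ = dist P₁ P₃) (hl₃ : l₃ = dist P₁ P₂)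
    (hL : L = l₁ + l₂ + l₃)
    (hA : A = (volume (convexHull ℝ ({P₁, P₂, P₃} : Set (EuclideanSpace ℝ (Fin 2))))).toReal) :
    12 * Real.sqrt 3 * A ≤ L ^ 2 ∧
      (12 * Real.sqrt 3 * A = L ^ 2 ↔ (l₁ = l₂ ∧ l₂ = l₃)) := by
  obtain ⟨d, hd⟩ : ∃ d : ℝ, d = (P₂ 0 - P₁ 0) * (P₃ 1 - P₁ 1) - (P₂ 1 - P₁ 1) * (P₃ 0 - P₁ 0) :=
    ⟨_, rfl⟩
  have hA' : A = |d| / 2 := by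
    rw [hA, triangle_volume, ENNReal.toReal_ofReal (by positivity), hd]
  have hd0 : d ≠ 0 := by
    intro h
    exact hnc (collinear_of_det_eq_zero P₁ P₂ P₃ (by rw [← hd]; exact h))
  have hApos : 0 < A := by
    rw [hA']
    have := abs_pos.2 hd0
    positivity
  have hq₁ : l₁ ^ 2 = (P₂ 0 - P₃ 0) ^ 2 + (P₂ 1 - P₃ 1) ^ 2 := by rw [hl₁, dist_sq_coords]
  have hq₂ : l₂ ^ 2 = (P₁ 0 - P₃ 0) ^ 2 + (P₁ 1 - P₃ 1) ^ 2 := by rw [hl₂, dist_sq_coords]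
  have hq₃ : l₃ ^ 2 = (P₁ 0 - P₂ 0) ^ 2 + (P₁ 1 - P₂ 1) ^ 2 := by rw [hl₃, dist_sq_coords]
  have heron : 16 * A ^ 2 =
      (l₁ + l₂ + l₃) * (-l₁ + l₂ + l₃) * (l₁ - l₂ + l₃) * (l₁ + l₂ - l₃) := by
    have h16 : 16 * A ^ 2 = 4 * d ^ 2 := by
      rw [hA', div_pow, sq_abs]; ring
    have e : (l₁ + l₂ + l₃) * (-l₁ + l₂ + l₃) * (l₁ - l₂ + l₃) * (l₁ + l₂ - l₃) =
        2 * (l₁ ^ 2 * l₂ ^ 2) + 2 * (l₂ ^ 2 * l₃ ^ 2) + 2 * (l₃ ^ 2 * l₁ ^ 2)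
          - (l₁ ^ 2) ^ 2 - (l₂ ^ 2) ^ 2 - (l₃ ^ 2) ^ 2 := by ring
    rw [h16, e, hq₁, hq₂, hq₃, hd]
    ring
  have h₁ : 0 ≤ l₁ := hl₁ ▸ dist_nonneg
  have h₂ : 0 ≤ l₂ := hl₂ ▸ dist_nonneg
  have h₃ : 0 ≤ l₃ := hl₃ ▸ dist_nonneg
  have := alg_lemma l₁ l₂ l₃ A h₁ h₂ h₃ hApos heron
  rw [hL]
  exact this

end
end

section
/- For all real numbers r and s with 1 < r ≤ 2 and 0 ≤ s < 1, one has 2r − (1 + s²) ≥ √(3(r² − 1)(1 − s²)), with equality if and only if r = 2 and s = 0. -/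
/-- For `1 < r ≤ 2` and `0 ≤ s < 1`, `2r − (1+s²) ≥ √(3(r²−1)(1−s²))`,
with equality iff `r = 2` and `s = 0`. -/
theorem stmt_9 (r s : ℝ) (hr1 : 1 < r) (hr2 : r ≤ 2) (hs0 : 0 ≤ s) (hs1 : s < 1) :
    Real.sqrt (3 * (r ^ 2 - 1) * (1 - s ^ 2)) ≤ 2 * r - (1 + s ^ 2) ∧
    (2 * r - (1 + s ^ 2) = Real.sqrt (3 * (r ^ 2 - 1) * (1 - s ^ 2)) ↔ r = 2 ∧ s = 0) := by
  have hs2 : s ^ 2 < 1 := by nlinarith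
  have ha : 0 < 2 * r - (1 + s ^ 2) := by nlinarith
  have hX : 0 ≤ 3 * (r ^ 2 - 1) * (1 - s ^ 2) :=
    mul_nonneg (mul_nonneg (by norm_num) (by nlinarith)) (by nlinarith)
  have hle : Real.sqrt (3 * (r ^ 2 - 1) * (1 - s ^ 2)) ≤ 2 * r - (1 + s ^ 2) := by
    rw [show (2 * r - (1 + s ^ 2)) = Real.sqrt ((2 * r - (1 + s ^ 2)) ^ 2) from
      (Real.sqrt_sq ha.le).symm]
    apply Real.sqrt_le_sqrt
    nlinarith [sq_nonneg (r - 2), sq_nonneg (s * (r - 1)), sq_nonneg (s ^ 2 - (2 - r)),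
      sq_nonneg (s ^ 2 + (2 - r)), sq_nonneg s, sq_nonneg (r - 1)]
  refine ⟨hle, ?_, ?_⟩
  · intro h
    have h2 : (2 * r - (1 + s ^ 2)) ^ 2 = 3 * (r ^ 2 - 1) * (1 - s ^ 2) := by
      rw [h, Real.sq_sqrt hX]
    have hr : r = 2 := by
      by_contra hne
      have hlt : r < 2 := lt_of_le_of_ne hr2 hne
      rcases le_or_gt 0 (3 * r ^ 2 - 4 * r - 1) with hb | hb
      · nlinarith [sq_nonneg s, sq_nonneg (s ^ 2), mul_nonneg (sq_nonneg s) hb,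
          mul_pos (sub_pos.mpr hlt) (sub_pos.mpr hr1)]
      · nlinarith [sq_nonneg (2 * s ^ 2 + (3 * r ^ 2 - 4 * r - 1)), sq_nonneg (r - 1),
          mul_pos (mul_pos (sub_pos.mpr hr1) (sub_pos.mpr hr1)) (show (0:ℝ) < 5 - 3 * r by nlinarith),
          sq_nonneg s]
    have hs : s = 0 := by
      nlinarith [sq_nonneg s, sq_nonneg (s ^ 2)]
    exact ⟨hr, hs⟩
  · rintro ⟨rfl, rfl⟩
    norm_num
end

section
/- The function u₁(x,y) = 2·[cos(π(2x−1)/3) + cos(2πy/√3)]·sin(π(2x−1)/3) satisfies the eigenvalue equation Δu₁ = −(16π²/9)·u₁ at every point of ℝ², where Δu₁ = ∂²u₁/∂x² + ∂²u₁/∂y². -/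
open Real

lemma hA_aux (t : ℝ) : HasDerivAt (fun t : ℝ => π * (2 * t - 1) / 3) (2 * π / 3) t := by
  have h := ((((hasDerivAt_id t).const_mul 2).sub_const 1).const_mul π).div_const 3
  exact h.congr_deriv (by ring)

lemma hB_aux (t : ℝ) : HasDerivAt (fun t : ℝ => 2 * π * t / sqrt 3) (2 * π / sqrt 3) t := by
  have h := ((hasDerivAt_id t).const_mul (2 * π)).div_const (sqrt 3)
  exact h.congr_deriv (by ring)

/-- The function `u₁` satisfies `Δu₁ = −(16π²/9) u₁` on all of `ℝ²`. -/
theorem stmt_10 (u₁ : ℝ → ℝ → ℝ)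
    (hu₁ : ∀ x y, u₁ x y =
      2 * (cos (π * (2 * x - 1) / 3) + cos (2 * π * y / sqrt 3)) * sin (π * (2 * x - 1) / 3)) :
    ∀ x y : ℝ,
      deriv (fun t => deriv (fun s => u₁ s y) t) x
        + deriv (fun t => deriv (fun s => u₁ x s) t) y
      = -(16 * π ^ 2 / 9) * u₁ x y := by
  intro x y
  simp only [hu₁]
  set k : ℝ := 2 * π / 3 with hk
  set m : ℝ := 2 * π / sqrt 3 with hm
  set C : ℝ := cos (2 * π * y / sqrt 3) with hC
  -- first x-derivative
  have hdx : ∀ t : ℝ, HasDerivAt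
      (fun s => 2 * (cos (π * (2 * s - 1) / 3) + C) * sin (π * (2 * s - 1) / 3))
      (2 * (-sin (π * (2 * t - 1) / 3) * k) * sin (π * (2 * t - 1) / 3)
        + 2 * (cos (π * (2 * t - 1) / 3) + C) * (cos (π * (2 * t - 1) / 3) * k)) t := by
    intro t
    exact ((((hA_aux t).cos).add_const C).const_mul 2).mul ((hA_aux t).sin)
  have hex : (fun t => deriv (fun s =>
        2 * (cos (π * (2 * s - 1) / 3) + C) * sin (π * (2 * s - 1) / 3)) t)
      = fun t => 2 * (-sin (π * (2 * t - 1) / 3) * k) * sin (π * (2 * t - 1) / 3)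
        + 2 * (cos (π * (2 * t - 1) / 3) + C) * (cos (π * (2 * t - 1) / 3) * k) :=
    funext fun t => (hdx t).deriv
  -- second x-derivative
  have hdx2 : HasDerivAt
      (fun t => 2 * (-sin (π * (2 * t - 1) / 3) * k) * sin (π * (2 * t - 1) / 3)
        + 2 * (cos (π * (2 * t - 1) / 3) + C) * (cos (π * (2 * t - 1) / 3) * k))
      (2 * (-(cos (π * (2 * x - 1) / 3) * k) * k) * sin (π * (2 * x - 1) / 3)
        + 2 * (-sin (π * (2 * x - 1) / 3) * k) * (cos (π * (2 * x - 1) / 3) * k)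
        + (2 * (-sin (π * (2 * x - 1) / 3) * k) * (cos (π * (2 * x - 1) / 3) * k)
          + 2 * (cos (π * (2 * x - 1) / 3) + C) * (-sin (π * (2 * x - 1) / 3) * k * k))) x := by
    have h1 := (((((hA_aux x).sin).neg).mul_const k).const_mul 2).mul ((hA_aux x).sin)
    have h2 := ((((hA_aux x).cos).add_const C).const_mul 2).mul (((hA_aux x).cos).mul_const k)
    exact h1.add h2
  -- first y-derivative
  have hdy : ∀ t : ℝ, HasDerivAt
      (fun s => 2 * (cos (π * (2 * x - 1) / 3) + cos (2 * π * s / sqrt 3)) * sin (π * (2 * x - 1) / 3))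
      (2 * (-sin (2 * π * t / sqrt 3) * m) * sin (π * (2 * x - 1) / 3)) t := by
    intro t
    exact ((((hB_aux t).cos).const_add (cos (π * (2 * x - 1) / 3))).const_mul 2).mul_const
      (sin (π * (2 * x - 1) / 3))
  have hey : (fun t => deriv (fun s =>
        2 * (cos (π * (2 * x - 1) / 3) + cos (2 * π * s / sqrt 3)) * sin (π * (2 * x - 1) / 3)) t)
      = fun t => 2 * (-sin (2 * π * t / sqrt 3) * m) * sin (π * (2 * x - 1) / 3) :=
    funext fun t => (hdy t).deriv
  -- second y-derivative
  have hdy2 : HasDerivAt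
      (fun t => 2 * (-sin (2 * π * t / sqrt 3) * m) * sin (π * (2 * x - 1) / 3))
      (2 * (-(cos (2 * π * y / sqrt 3) * m) * m) * sin (π * (2 * x - 1) / 3)) y := by
    exact (((((hB_aux y).sin).neg).mul_const m).const_mul 2).mul_const
      (sin (π * (2 * x - 1) / 3))
  rw [hex, hey, hdx2.deriv, hdy2.deriv]
  have h3 : (sqrt 3 : ℝ) ^ 2 = 3 := Real.sq_sqrt (by norm_num)
  have h3' : (sqrt 3 : ℝ) ≠ 0 := by positivity
  have hm2 : m ^ 2 = 4 * π ^ 2 / 3 := by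
    rw [hm, div_pow, mul_pow, h3]
    ring
  have hk2 : k ^ 2 = 4 * π ^ 2 / 9 := by rw [hk]; ring
  rw [hC]
  linear_combination (-8 * sin (π * (2 * x - 1) / 3) * cos (π * (2 * x - 1) / 3)
      - 2 * cos (2 * π * y / sqrt 3) * sin (π * (2 * x - 1) / 3)) * hk2
    + (-2 * cos (2 * π * y / sqrt 3) * sin (π * (2 * x - 1) / 3)) * hm2
end

section
/- The function u₁(x,y) = 2·[cos(π(2x−1)/3) + cos(2πy/√3)]·sin(π(2x−1)/3) satisfies the Neumann boundary condition on the equilateral triangle E with vertices (0,0), (1,0), (1/2,√3/2): (i) ∂u₁/∂y (x,0) = 0 for all 0 ≤ x ≤ 1; (ii) √3·∂u₁/∂x + ∂u₁/∂y = 0 at every point (x,y) with x + y/√3 = 1 and 0 ≤ y ≤ √3/2; (iii) √3·∂u₁/∂x − ∂u₁/∂y = 0 at every point (x,y) with x − y/√3 = 0 and 0 ≤ y ≤ √3/2. -/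
open Real

private lemma dyL (x y : ℝ) :
    HasDerivAt (fun s => 2 * (cos (π * (2 * x - 1) / 3) + cos (2 * π * s / sqrt 3)) *
      sin (π * (2 * x - 1) / 3))
      (2 * (-sin (2 * π * y / sqrt 3) * (2 * π / sqrt 3)) * sin (π * (2 * x - 1) / 3)) y := by
  have hb : HasDerivAt (fun s : ℝ => 2 * π * s / sqrt 3) (2 * π / sqrt 3) y := by
    simpa using ((hasDerivAt_id y).const_mul (2 * π)).div_const (sqrt 3)
  exact ((hb.cos.const_add (cos (π * (2 * x - 1) / 3))).const_mul 2).mul_const _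

private lemma dxL (x C : ℝ) :
    HasDerivAt (fun t => 2 * (cos (π * (2 * t - 1) / 3) + C) * sin (π * (2 * t - 1) / 3))
      (2 * (-sin (π * (2 * x - 1) / 3) * (2 * π / 3)) * sin (π * (2 * x - 1) / 3)
        + 2 * (cos (π * (2 * x - 1) / 3) + C) * (cos (π * (2 * x - 1) / 3) * (2 * π / 3))) x := by
  have ha : HasDerivAt (fun t : ℝ => π * (2 * t - 1) / 3) (2 * π / 3) x := by
    have h1 : HasDerivAt (fun t : ℝ => 2 * t - 1) 2 x := by
      simpa using ((hasDerivAt_id x).const_mul 2).sub_const 1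
    have := (h1.const_mul π).div_const 3
    rw [show (2:ℝ) * π / 3 = π * 2 / 3 by ring]
    exact this
  exact ((ha.cos.add_const C).const_mul 2).mul ha.sin

/-- The function `u₁` satisfies the Neumann boundary condition on the three sides of
the equilateral triangle with vertices `(0,0)`, `(1,0)`, `(1/2,√3/2)`. -/
theorem stmt_12 (u₁ : ℝ → ℝ → ℝ)
    (hu₁ : ∀ x y, u₁ x y =
      2 * (cos (π * (2 * x - 1) / 3) + cos (2 * π * y / sqrt 3)) * sin (π * (2 * x - 1) / 3)) :
    (∀ x : ℝ, 0 ≤ x → x ≤ 1 → deriv (fun s => u₁ x s) 0 = 0) ∧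
    (∀ x y : ℝ, x + y / sqrt 3 = 1 → 0 ≤ y → y ≤ sqrt 3 / 2 →
      sqrt 3 * deriv (fun t => u₁ t y) x + deriv (fun s => u₁ x s) y = 0) ∧
    (∀ x y : ℝ, x - y / sqrt 3 = 0 → 0 ≤ y → y ≤ sqrt 3 / 2 →
      sqrt 3 * deriv (fun t => u₁ t y) x - deriv (fun s => u₁ x s) y = 0) := by
  have hs : sqrt 3 * sqrt 3 = 3 := Real.mul_self_sqrt (by norm_num)
  refine ⟨?_, ?_, ?_⟩
  · intro x _ _
    simp only [hu₁]
    rw [(dyL x 0).deriv]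
    simp
  · intro x y hx _ _
    simp only [hu₁]
    rw [(dyL x y).deriv, (dxL x (cos (2 * π * y / sqrt 3))).deriv]
    set a := π * (2 * x - 1) / 3 with ha
    set b := 2 * π * y / sqrt 3 with hb
    have h3 : 2 * a = π - (a + b) := by
      rw [ha, hb]
      linear_combination (2 * π) * hx
    have key : cos a * cos a - sin a * sin a + (cos b * cos a - sin b * sin a) = 0 := by
      have e1 : cos a * cos a - sin a * sin a = cos (a + a) := (Real.cos_add a a).symm
      have e2 : cos b * cos a - sin b * sin a = cos (b + a) := (Real.cos_add b a).symm
      rw [e1, e2]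
      have : cos (a + a) = - cos (a + b) := by
        rw [show a + a = 2 * a by ring, h3, Real.cos_pi_sub]
      rw [this, show b + a = a + b by ring]
      ring
    have hsne : sqrt 3 ≠ 0 := by positivity
    have h1 : 2 * π / sqrt 3 = sqrt 3 * (2 * π / 3) := by
      rw [div_eq_iff hsne]; linear_combination (-(2 * π / 3)) * hs
    rw [h1]
    linear_combination (sqrt 3 * 4 * π / 3) * key
  · intro x y hx _ _
    simp only [hu₁]
    rw [(dyL x y).deriv, (dxL x (cos (2 * π * y / sqrt 3))).deriv]
    set a := π * (2 * x - 1) / 3 with ha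
    set b := 2 * π * y / sqrt 3 with hb
    have h3 : 2 * a = (b - a) - π := by
      rw [ha, hb]
      linear_combination (2 * π) * hx
    have key : cos a * cos a - sin a * sin a + (cos b * cos a + sin b * sin a) = 0 := by
      have e1 : cos a * cos a - sin a * sin a = cos (a + a) := (Real.cos_add a a).symm
      have e2 : cos b * cos a + sin b * sin a = cos (b - a) := (Real.cos_sub b a).symm
      rw [e1, e2]
      have : cos (a + a) = - cos (b - a) := by
        rw [show a + a = 2 * a by ring, h3, Real.cos_sub_pi]
      rw [this]
      ring
    have hsne : sqrt 3 ≠ 0 := by positivity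
    have h1 : 2 * π / sqrt 3 = sqrt 3 * (2 * π / 3) := by
      rw [div_eq_iff hsne]; linear_combination (-(2 * π / 3)) * hs
    rw [h1]
    linear_combination (sqrt 3 * 4 * π / 3) * key
end

section
/- For the equilateral triangle E with vertices (0,0), (1,0), (1/2,√3/2), the function u₁(x,y) = 2[cos(π(2x−1)/3) + cos(2πy/√3)]·sin(π(2x−1)/3) satisfies ∫_E (∂u₁/∂x)² dA = (32π² + 243)/(32√3), ∫_E (∂u₁/∂y)² dA = (32π² − 243)/(32√3), and ∫_E (∂u₁/∂x)(∂u₁/∂y) dA = 0. -/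
open MeasureTheory Real Set

noncomputable section

def Tri : Set (ℝ × ℝ) := {p | 0 ≤ p.2 ∧ p.2 ≤ sqrt 3 * p.1 ∧ p.2 ≤ sqrt 3 * (1 - p.1)}

lemma measurable_Tri : MeasurableSet Tri := by
  have h1 : MeasurableSet {p : ℝ × ℝ | 0 ≤ p.2} := measurableSet_le measurable_const measurable_snd
  have h2 : MeasurableSet {p : ℝ × ℝ | p.2 ≤ sqrt 3 * p.1} :=
    measurableSet_le measurable_snd (measurable_fst.const_mul _)
  have h3 : MeasurableSet {p : ℝ × ℝ | p.2 ≤ sqrt 3 * (1 - p.1)} :=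
    measurableSet_le measurable_snd ((measurable_const.sub measurable_fst).const_mul _)
  exact (h1.inter (h2.inter h3) : _)

lemma Tri_subset : Tri ⊆ Icc ((0:ℝ),(0:ℝ)) ((1:ℝ), sqrt 3) := by
  rintro ⟨x, y⟩ ⟨h0, h1, h2⟩
  have h3 : (0:ℝ) < sqrt 3 := by positivity
  have hx0 : 0 ≤ x := by nlinarith
  have hx1 : x ≤ 1 := by nlinarith
  have hy : y ≤ sqrt 3 := by nlinarith
  exact ⟨⟨hx0, h0⟩, ⟨hx1, hy⟩⟩

lemma reduce (f : ℝ → ℝ → ℝ) (Φ : ℝ → ℝ → ℝ)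
    (hf : Continuous fun p : ℝ × ℝ => f p.1 p.2)
    (hΦ : ∀ x t : ℝ, (∫ y in (0:ℝ)..t, f x y) = Φ x t)
    (hΦc : Continuous fun x : ℝ => Φ x (min (sqrt 3 * x) (sqrt 3 * (1 - x)))) :
    (∫ p in Tri, f p.1 p.2) = (∫ x in (0:ℝ)..(1/2:ℝ), Φ x (sqrt 3 * x))
      + ∫ x in (0:ℝ)..(1/2:ℝ), Φ (1-x) (sqrt 3 * x) := by
  set m : ℝ → ℝ := fun x => min (sqrt 3 * x) (sqrt 3 * (1 - x)) with hm
  have h3 : (0:ℝ) < sqrt 3 := by positivity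
  have hmIcc : ∀ x : ℝ, x ∈ Icc (0:ℝ) 1 → 0 ≤ m x := by
    intro x hx
    exact le_min (mul_nonneg h3.le hx.1) (mul_nonneg h3.le (by linarith [hx.2]))
  have hint : IntegrableOn (fun p : ℝ × ℝ => f p.1 p.2) Tri volume :=
    (hf.continuousOn.integrableOn_compact isCompact_Icc).mono_set Tri_subset
  have h1 : (∫ p in Tri, f p.1 p.2) = ∫ x : ℝ, ∫ y : ℝ, Tri.indicator (fun p : ℝ × ℝ => f p.1 p.2) (x, y) := by
    rw [← integral_indicator measurable_Tri, Measure.volume_eq_prod]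
    exact integral_prod _ (by
      rw [← Measure.volume_eq_prod, integrable_indicator_iff measurable_Tri]; exact hint)
  have hsec : ∀ x : ℝ, (∫ y : ℝ, Tri.indicator (fun p : ℝ × ℝ => f p.1 p.2) (x, y))
      = ∫ y in Icc (0:ℝ) (m x), f x y := by
    intro x
    rw [← integral_indicator measurableSet_Icc]
    congr 1
    funext y
    by_cases hmem : (x, y) ∈ Tri
    · rw [indicator_of_mem hmem,
        indicator_of_mem (mem_Icc.2 ⟨hmem.1, le_min hmem.2.1 hmem.2.2⟩)]
    · refine (indicator_of_notMem hmem _).trans (indicator_of_notMem (fun hy => hmem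
        ⟨(mem_Icc.1 hy).1, le_trans (mem_Icc.1 hy).2 (min_le_left _ _),
          le_trans (mem_Icc.1 hy).2 (min_le_right _ _)⟩) _).symm
  have hzero : ∀ x : ℝ, x ∉ Icc (0:ℝ) 1 → (∫ y in Icc (0:ℝ) (m x), f x y) = 0 := by
    intro x hx
    rw [mem_Icc, not_and_or] at hx
    have hneg : m x < 0 := by
      rcases hx with hx | hx
      · push_neg at hx
        exact lt_of_le_of_lt (min_le_left _ _) (by nlinarith)
      · push_neg at hx
        exact lt_of_le_of_lt (min_le_right _ _) (by nlinarith)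
    rw [Icc_eq_empty (not_le.mpr hneg)]
    simp
  have h4 : (fun x : ℝ => (∫ y in Icc (0:ℝ) (m x), f x y))
      = (Icc (0:ℝ) 1).indicator (fun x => ∫ y in Icc (0:ℝ) (m x), f x y) := by
    funext x
    by_cases hx : x ∈ Icc (0:ℝ) 1
    · rw [indicator_of_mem hx]
    · rw [indicator_of_notMem hx, hzero x hx]
  rw [h1]
  simp only [hsec]
  rw [h4, integral_indicator measurableSet_Icc, integral_Icc_eq_integral_Ioc,
    ← intervalIntegral.integral_of_le (by norm_num : (0:ℝ) ≤ 1)]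
  have h6 : (∫ x in (0:ℝ)..1, (∫ y in Icc (0:ℝ) (m x), f x y))
      = ∫ x in (0:ℝ)..1, Φ x (m x) := by
    apply intervalIntegral.integral_congr
    intro x hx
    rw [uIcc_of_le (by norm_num : (0:ℝ) ≤ 1)] at hx
    show (∫ y in Icc (0:ℝ) (m x), f x y) = Φ x (m x)
    rw [integral_Icc_eq_integral_Ioc, ← intervalIntegral.integral_of_le (hmIcc x hx), hΦ]
  rw [h6]
  rw [← intervalIntegral.integral_add_adjacent_intervals (a := (0:ℝ)) (b := (1/2:ℝ)) (c := (1:ℝ))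
      (hΦc.intervalIntegrable _ _) (hΦc.intervalIntegrable _ _)]
  have h7 : (∫ x in (1/2:ℝ)..1, Φ x (m x)) = ∫ x in (0:ℝ)..(1/2:ℝ), Φ (1-x) (m (1-x)) := by
    rw [intervalIntegral.integral_comp_sub_left (fun x => Φ x (m x)) 1]
    norm_num
  rw [h7]
  have hxle : ∀ x : ℝ, x ∈ uIcc (0:ℝ) (1/2:ℝ) → m x = sqrt 3 * x := by
    intro x hx
    rw [uIcc_of_le (by norm_num : (0:ℝ) ≤ 1/2), mem_Icc] at hx
    exact min_eq_left (by nlinarith [hx.1, hx.2])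
  congr 1
  · refine intervalIntegral.integral_congr (fun x hx => ?_)
    show Φ x (m x) = Φ x (sqrt 3 * x)
    rw [hxle x hx]
  · refine intervalIntegral.integral_congr (fun x hx => ?_)
    show Φ (1-x) (m (1-x)) = Φ (1-x) (sqrt 3 * x)
    have e : (1:ℝ) - (1 - x) = x := by ring
    have hmx : m (1-x) = sqrt 3 * x := by
      show min (sqrt 3 * (1-x)) (sqrt 3 * (1 - (1-x))) = sqrt 3 * x
      rw [e]
      rw [uIcc_of_le (by norm_num : (0:ℝ) ≤ 1/2), mem_Icc] at hx
      exact min_eq_right (by nlinarith [hx.1, hx.2])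
    rw [hmx]

lemma hull_eq : convexHull ℝ {((0:ℝ),(0:ℝ)), (1,0), (1/2, sqrt 3/2)} = Tri := by
  have h3 : (0:ℝ) < sqrt 3 := by positivity
  have hs1 : sqrt 3 * (sqrt 3)⁻¹ = 1 := mul_inv_cancel₀ (ne_of_gt h3)
  apply subset_antisymm
  · apply convexHull_min
    · rintro p hp
      simp only [mem_insert_iff, mem_singleton_iff] at hp
      rcases hp with rfl | rfl | rfl <;>
        · refine ⟨?_, ?_, ?_⟩ <;> simp <;> nlinarith [Real.sqrt_nonneg 3]
    · intro p hp q hq a b ha hb hab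
      obtain ⟨hp0, hp1, hp2⟩ := hp
      obtain ⟨hq0, hq1, hq2⟩ := hq
      refine ⟨?_, ?_, ?_⟩ <;>
        simp only [Prod.fst_add, Prod.snd_add, Prod.smul_snd, Prod.smul_fst, smul_eq_mul] <;>
        nlinarith [mul_le_mul_of_nonneg_left hp1 ha, mul_le_mul_of_nonneg_left hq1 hb,
          mul_le_mul_of_nonneg_left hp2 ha, mul_le_mul_of_nonneg_left hq2 hb,
          mul_nonneg ha hp0, mul_nonneg hb hq0]
  · rintro ⟨x, y⟩ ⟨h0, h1, h2⟩
    have hSnn : (0:ℝ) ≤ (sqrt 3)⁻¹ := by positivity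
    have hw1 : 0 ≤ 1 - x - y * (sqrt 3)⁻¹ := by
      nlinarith [mul_le_mul_of_nonneg_right h2 hSnn]
    have hw2 : 0 ≤ x - y * (sqrt 3)⁻¹ := by
      nlinarith [mul_le_mul_of_nonneg_right h1 hSnn]
    have hw3 : 0 ≤ 2 * y * (sqrt 3)⁻¹ := by positivity
    have hc := convex_convexHull ℝ ({((0:ℝ),(0:ℝ)), (1,0), (1/2, sqrt 3/2)} : Set (ℝ × ℝ))
    have hmem := hc.sum_mem (t := (Finset.univ : Finset (Fin 3)))
      (w := ![1 - x - y * (sqrt 3)⁻¹, x - y * (sqrt 3)⁻¹, 2 * y * (sqrt 3)⁻¹])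
      (z := ![((0:ℝ),(0:ℝ)), (1,0), (1/2, sqrt 3/2)])
      (by intro i _; fin_cases i <;> simp <;> linarith [hw1, hw2, hw3])
      (by simp [Fin.sum_univ_three]; ring)
      (by intro i _; fin_cases i <;> exact subset_convexHull _ _ (by simp))
    have hxy : ((x, y) : ℝ × ℝ) = ∑ i : Fin 3,
        (![1 - x - y * (sqrt 3)⁻¹, x - y * (sqrt 3)⁻¹, 2 * y * (sqrt 3)⁻¹] i) •
        (![((0:ℝ),(0:ℝ)), (1,0), (1/2, sqrt 3/2)] i) := by
      simp only [Fin.sum_univ_three]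
      refine Prod.ext ?_ ?_ <;>
        simp only [Matrix.cons_val_zero, Matrix.cons_val_one, Matrix.head_cons,
          Prod.fst_add, Prod.snd_add, Prod.smul_fst, Prod.smul_snd, smul_eq_mul,
          Matrix.cons_val_two, Matrix.tail_cons]
      · ring
      · linear_combination (-y) * hs1
    rw [hxy]
    exact hmem

lemma haA (x : ℝ) : HasDerivAt (fun t : ℝ => π*(2*t-1)/3) (2*π/3) x := by
  have h : (fun t : ℝ => π*(2*t-1)/3) = (fun t : ℝ => (2*π/3)*t + -(π/3)) := by
    funext t; ring
  rw [h]
  simpa using ((hasDerivAt_id x).const_mul (2*π/3)).add_const (-(π/3))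

lemma haD (x : ℝ) : HasDerivAt (fun t : ℝ => 2*π*t) (2*π) x := by
  simpa using (hasDerivAt_id x).const_mul (2*π)

lemma haB (y : ℝ) : HasDerivAt (fun s : ℝ => 2*π*s/sqrt 3) (2*π/sqrt 3) y := by
  have h : (fun s : ℝ => 2*π*s/sqrt 3) = (fun s : ℝ => (2*π/sqrt 3)*s + 0) := by
    funext s; ring
  rw [h]
  simpa using ((hasDerivAt_id y).const_mul (2*π/sqrt 3)).add_const 0

lemma mono (c : ℝ) (j p q r s : ℕ) (x : ℝ) :
    HasDerivAt (fun t : ℝ => c * (t^j * cos (π*(2*t-1)/3)^p * sin (π*(2*t-1)/3)^q * cos (2*π*t)^r * sin (2*π*t)^s))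
    (c * ( ((j:ℝ)*x^(j-1)) * cos (π*(2*x-1)/3)^p * sin (π*(2*x-1)/3)^q * cos (2*π*x)^r * sin (2*π*x)^s
       + x^j * ((p:ℝ)*cos (π*(2*x-1)/3)^(p-1)*(-sin (π*(2*x-1)/3)*(2*π/3))) * sin (π*(2*x-1)/3)^q * cos (2*π*x)^r * sin (2*π*x)^s
       + x^j * cos (π*(2*x-1)/3)^p * ((q:ℝ)*sin (π*(2*x-1)/3)^(q-1)*(cos (π*(2*x-1)/3)*(2*π/3))) * cos (2*π*x)^r * sin (2*π*x)^s
       + x^j * cos (π*(2*x-1)/3)^p * sin (π*(2*x-1)/3)^q * ((r:ℝ)*cos (2*π*x)^(r-1)*(-sin (2*π*x)*(2*π))) * sin (2*π*x)^s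
       + x^j * cos (π*(2*x-1)/3)^p * sin (π*(2*x-1)/3)^q * cos (2*π*x)^r * ((s:ℝ)*sin (2*π*x)^(s-1)*(cos (2*π*x)*(2*π))))) x := by
  have h := ((((hasDerivAt_pow j x).mul ((haA x).cos.pow p)).mul ((haA x).sin.pow q)).mul ((haD x).cos.pow r)).mul ((haD x).sin.pow s)
  exact (h.const_mul c).congr_deriv (by simp only [Pi.pow_apply, Pi.mul_apply]; ring)


lemma derivX (y x : ℝ) :
    deriv (fun t : ℝ => 2*(cos (π*(2*t-1)/3) + cos (2*π*y/sqrt 3))*sin (π*(2*t-1)/3)) x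
      = 4*π/3*(2*cos (π*(2*x-1)/3)^2 - 1 + cos (2*π*y/sqrt 3)*cos (π*(2*x-1)/3)) := by
  refine HasDerivAt.deriv ?_
  exact ((((haA x).cos.add_const (cos (2*π*y/sqrt 3))).const_mul 2).mul (haA x).sin).congr_deriv
    (by linear_combination (-(4*π/3)) * (sin_sq_add_cos_sq (π*(2*x-1)/3)))

lemma derivY (x y : ℝ) :
    deriv (fun s : ℝ => 2*(cos (π*(2*x-1)/3) + cos (2*π*s/sqrt 3))*sin (π*(2*x-1)/3)) y
      = -(4*π/sqrt 3)*(sin (π*(2*x-1)/3)*sin (2*π*y/sqrt 3)) := by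
  refine HasDerivAt.deriv ?_
  exact ((((haB y).cos.const_add (cos (π*(2*x-1)/3))).const_mul 2).mul_const (sin (π*(2*x-1)/3))).congr_deriv
    (by ring)


lemma ftcXX (x t : ℝ) : (∫ y in (0:ℝ)..t, (4*π/3*(2*cos (π*(2*x-1)/3)^2 - 1 + cos (2*π*y/sqrt 3)*cos (π*(2*x-1)/3)))^2) = 16*π^2/9*((2*cos (π*(2*x-1)/3)^2-1)^2*t + sqrt 3*π⁻¹*((2*cos (π*(2*x-1)/3)^2-1)*cos (π*(2*x-1)/3))*sin (2*π*t/sqrt 3) + cos (π*(2*x-1)/3)^2*(t/2 + sqrt 3/4*π⁻¹*(sin (2*π*t/sqrt 3)*cos (2*π*t/sqrt 3)))) := by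
  have hpP : π * π⁻¹ = 1 := mul_inv_cancel₀ pi_ne_zero
  have hsS : sqrt 3 * (sqrt 3)⁻¹ = 1 := mul_inv_cancel₀ (by positivity)
  have hss : sqrt 3 * sqrt 3 = 3 := Real.mul_self_sqrt (by norm_num)
  have hSS : (sqrt 3)⁻¹ * (sqrt 3)⁻¹ = 1/3 := by rw [← mul_inv, hss]; norm_num
  have hd : ∀ y : ℝ, HasDerivAt (fun y : ℝ => 16*π^2/9*((2*cos (π*(2*x-1)/3)^2-1)^2*y + sqrt 3*π⁻¹*((2*cos (π*(2*x-1)/3)^2-1)*cos (π*(2*x-1)/3))*sin (2*π*y/sqrt 3) + cos (π*(2*x-1)/3)^2*(y/2 + sqrt 3/4*π⁻¹*(sin (2*π*y/sqrt 3)*cos (2*π*y/sqrt 3))))) ((4*π/3*(2*cos (π*(2*x-1)/3)^2 - 1 + cos (2*π*y/sqrt 3)*cos (π*(2*x-1)/3)))^2) y := by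
    intro y
    exact (((((hasDerivAt_id y).const_mul ((2*cos (π*(2*x-1)/3)^2-1)^2)).add
      ((haB y).sin.const_mul (sqrt 3*π⁻¹*((2*cos (π*(2*x-1)/3)^2-1)*cos (π*(2*x-1)/3))))).add
      ((((hasDerivAt_id y).div_const 2).add
        (((haB y).sin.mul (haB y).cos).const_mul (sqrt 3/4*π⁻¹))).const_mul
          (cos (π*(2*x-1)/3)^2))).const_mul (16*π^2/9)).congr_deriv (by linear_combination ((-32/9:ℝ)*π^2*sqrt 3*(sqrt 3)⁻¹*cos (π*(2*x-1)/3)*cos (2*π*y/sqrt 3) + (-8/9:ℝ)*π^2*sqrt 3*(sqrt 3)⁻¹*cos (π*(2*x-1)/3)^2*sin (2*π*y/sqrt 3)^2 + (8/9:ℝ)*π^2*sqrt 3*(sqrt 3)⁻¹*cos (π*(2*x-1)/3)^2*cos (2*π*y/sqrt 3)^2 + (64/9:ℝ)*π^2*sqrt 3*(sqrt 3)⁻¹*cos (π*(2*x-1)/3)^3*cos (2*π*y/sqrt 3)) * hpP + ((-32/9:ℝ)*π^2*cos (π*(2*x-1)/3)*cos (2*π*y/sqrt 3) + (-8/9:ℝ)*π^2*cos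 (π*(2*x-1)/3)^2*sin (2*π*y/sqrt 3)^2 + (8/9:ℝ)*π^2*cos (π*(2*x-1)/3)^2*cos (2*π*y/sqrt 3)^2 + (64/9:ℝ)*π^2*cos (π*(2*x-1)/3)^3*cos (2*π*y/sqrt 3)) * hsS + ((-8/9:ℝ)*π^2*cos (π*(2*x-1)/3)^2) * (sin_sq_add_cos_sq (2*π*y/sqrt 3)))
  rw [intervalIntegral.integral_eq_sub_of_hasDerivAt (fun y _ => hd y)
    ((by fun_prop : Continuous fun y : ℝ => (4*π/3*(2*cos (π*(2*x-1)/3)^2 - 1 + cos (2*π*y/sqrt 3)*cos (π*(2*x-1)/3)))^2).intervalIntegrable _ _)]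
  show 16*π^2/9*((2*cos (π*(2*x-1)/3)^2-1)^2*t + sqrt 3*π⁻¹*((2*cos (π*(2*x-1)/3)^2-1)*cos (π*(2*x-1)/3))*sin (2*π*t/sqrt 3) + cos (π*(2*x-1)/3)^2*(t/2 + sqrt 3/4*π⁻¹*(sin (2*π*t/sqrt 3)*cos (2*π*t/sqrt 3)))) - (16*π^2/9*((2*cos (π*(2*x-1)/3)^2-1)^2*(0:ℝ) + sqrt 3*π⁻¹*((2*cos (π*(2*x-1)/3)^2-1)*cos (π*(2*x-1)/3))*sin (2*π*(0:ℝ)/sqrt 3) + cos (π*(2*x-1)/3)^2*((0:ℝ)/2 + sqrt 3/4*π⁻¹*(sin (2*π*(0:ℝ)/sqrt 3)*cos (2*π*(0:ℝ)/sqrt 3))))) = 16*π^2/9*((2*cos (π*(2*x-1)/3)^2-1)^2*t + sqrt 3*π⁻¹*((2*cos (π*(2*x-1)/3)^2-1)*cos (π*(2*x-1)/3))*sin (2*π*t/sqrt 3) + cos (π*(2*x-1)/3)^2*(t/2 + sqrt 3/4*π⁻¹*(sin (2*π*t/sqrt 3)*cos (2*π*t/sqrt 3))))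
  norm_num


lemma ftcYY (x t : ℝ) : (∫ y in (0:ℝ)..t, (-(4*π/sqrt 3)*(sin (π*(2*x-1)/3)*sin (2*π*y/sqrt 3)))^2) = 16*π^2/3*sin (π*(2*x-1)/3)^2*(t/2 - sqrt 3/4*π⁻¹*(sin (2*π*t/sqrt 3)*cos (2*π*t/sqrt 3))) := by
  have hpP : π * π⁻¹ = 1 := mul_inv_cancel₀ pi_ne_zero
  have hsS : sqrt 3 * (sqrt 3)⁻¹ = 1 := mul_inv_cancel₀ (by positivity)
  have hss : sqrt 3 * sqrt 3 = 3 := Real.mul_self_sqrt (by norm_num)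
  have hSS : (sqrt 3)⁻¹ * (sqrt 3)⁻¹ = 1/3 := by rw [← mul_inv, hss]; norm_num
  have hd : ∀ y : ℝ, HasDerivAt (fun y : ℝ => 16*π^2/3*sin (π*(2*x-1)/3)^2*(y/2 - sqrt 3/4*π⁻¹*(sin (2*π*y/sqrt 3)*cos (2*π*y/sqrt 3)))) ((-(4*π/sqrt 3)*(sin (π*(2*x-1)/3)*sin (2*π*y/sqrt 3)))^2) y := by
    intro y
    exact ((((hasDerivAt_id y).div_const 2).sub
      (((haB y).sin.mul (haB y).cos).const_mul (sqrt 3/4*π⁻¹))).const_mul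
        (16*π^2/3*sin (π*(2*x-1)/3)^2)).congr_deriv (by linear_combination ((8/3:ℝ)*π^2*sqrt 3*(sqrt 3)⁻¹*sin (π*(2*x-1)/3)^2*sin (2*π*y/sqrt 3)^2 + (-8/3:ℝ)*π^2*sqrt 3*(sqrt 3)⁻¹*sin (π*(2*x-1)/3)^2*cos (2*π*y/sqrt 3)^2) * hpP + ((8/3:ℝ)*π^2*sin (π*(2*x-1)/3)^2*sin (2*π*y/sqrt 3)^2 + (-8/3:ℝ)*π^2*sin (π*(2*x-1)/3)^2*cos (2*π*y/sqrt 3)^2) * hsS + ((-16:ℝ)*π^2*sin (π*(2*x-1)/3)^2*sin (2*π*y/sqrt 3)^2) * hSS + ((8/3:ℝ)*π^2 + (-8/3:ℝ)*π^2*sin (2*π*y/sqrt 3)^2 + (-8/3:ℝ)*π^2*cos (2*π*y/sqrt 3)^2) * (sin_sq_add_cos_sq (π*(2*x-1)/3)) + ((-8/3:ℝ)*π^2 + (8/3:ℝ)*π^2*cos (π*(2*x-1)/3)^2) * (sin_sq_add_cos_sq (2*π*y/sqrt 3)))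
  rw [intervalIntegral.integral_eq_sub_of_hasDerivAt (fun y _ => hd y)
    ((by fun_prop : Continuous fun y : ℝ => (-(4*π/sqrt 3)*(sin (π*(2*x-1)/3)*sin (2*π*y/sqrt 3)))^2).intervalIntegrable _ _)]
  show 16*π^2/3*sin (π*(2*x-1)/3)^2*(t/2 - sqrt 3/4*π⁻¹*(sin (2*π*t/sqrt 3)*cos (2*π*t/sqrt 3))) - (16*π^2/3*sin (π*(2*x-1)/3)^2*((0:ℝ)/2 - sqrt 3/4*π⁻¹*(sin (2*π*(0:ℝ)/sqrt 3)*cos (2*π*(0:ℝ)/sqrt 3)))) = 16*π^2/3*sin (π*(2*x-1)/3)^2*(t/2 - sqrt 3/4*π⁻¹*(sin (2*π*t/sqrt 3)*cos (2*π*t/sqrt 3)))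
  norm_num


lemma ftcXY (x t : ℝ) : (∫ y in (0:ℝ)..t, (4*π/3*(2*cos (π*(2*x-1)/3)^2 - 1 + cos (2*π*y/sqrt 3)*cos (π*(2*x-1)/3))) * (-(4*π/sqrt 3)*(sin (π*(2*x-1)/3)*sin (2*π*y/sqrt 3)))) = -(16*π^2/3)*(sqrt 3)⁻¹*sin (π*(2*x-1)/3)*((2*cos (π*(2*x-1)/3)^2-1)*(sqrt 3/2*π⁻¹)*(1 - cos (2*π*t/sqrt 3)) + cos (π*(2*x-1)/3)*(sqrt 3/4*π⁻¹)*sin (2*π*t/sqrt 3)^2) := by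
  have hpP : π * π⁻¹ = 1 := mul_inv_cancel₀ pi_ne_zero
  have hsS : sqrt 3 * (sqrt 3)⁻¹ = 1 := mul_inv_cancel₀ (by positivity)
  have hss : sqrt 3 * sqrt 3 = 3 := Real.mul_self_sqrt (by norm_num)
  have hSS : (sqrt 3)⁻¹ * (sqrt 3)⁻¹ = 1/3 := by rw [← mul_inv, hss]; norm_num
  have hd : ∀ y : ℝ, HasDerivAt (fun y : ℝ => -(16*π^2/3)*(sqrt 3)⁻¹*sin (π*(2*x-1)/3)*((2*cos (π*(2*x-1)/3)^2-1)*(sqrt 3/2*π⁻¹)*(1 - cos (2*π*y/sqrt 3)) + cos (π*(2*x-1)/3)*(sqrt 3/4*π⁻¹)*sin (2*π*y/sqrt 3)^2)) ((4*π/3*(2*cos (π*(2*x-1)/3)^2 - 1 + cos (2*π*y/sqrt 3)*cos (π*(2*x-1)/3))) * (-(4*π/sqrt 3)*(sin (π*(2*x-1)/3)*sin (2*π*y/sqrt 3)))) y := by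
    intro y
    exact (((((hasDerivAt_const y (1:ℝ)).sub (haB y).cos).const_mul
        ((2*cos (π*(2*x-1)/3)^2-1)*(sqrt 3/2*π⁻¹))).add
      (((haB y).sin.pow 2).const_mul (cos (π*(2*x-1)/3)*(sqrt 3/4*π⁻¹)))).const_mul
        (-(16*π^2/3)*(sqrt 3)⁻¹*sin (π*(2*x-1)/3))).congr_deriv (by linear_combination ((16/3:ℝ)*π^2*sqrt 3*(sqrt 3)⁻¹^2*sin (π*(2*x-1)/3)*sin (2*π*y/sqrt 3) + (-16/3:ℝ)*π^2*sqrt 3*(sqrt 3)⁻¹^2*cos (π*(2*x-1)/3)*sin (π*(2*x-1)/3)*cos (2*π*y/sqrt 3)*sin (2*π*y/sqrt 3) + (-32/3:ℝ)*π^2*sqrt 3*(sqrt 3)⁻¹^2*cos (π*(2*x-1)/3)^2*sin (π*(2*x-1)/3)*sin (2*π*y/sqrt 3)) * hpP + ((16/3:ℝ)*π^2*(sqrt 3)⁻¹*sin (π*(2*x-1)/3)*sin (2*π*y/sqrt 3) + (-16/3:ℝ)*π^2*(sqrt 3)⁻¹*cos (π*(2*x-1)/3)*sin (π*(2*x-1)/3)*cos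 (2*π*y/sqrt 3)*sin (2*π*y/sqrt 3) + (-32/3:ℝ)*π^2*(sqrt 3)⁻¹*cos (π*(2*x-1)/3)^2*sin (π*(2*x-1)/3)*sin (2*π*y/sqrt 3)) * hsS)
  rw [intervalIntegral.integral_eq_sub_of_hasDerivAt (fun y _ => hd y)
    ((by fun_prop : Continuous fun y : ℝ => (4*π/3*(2*cos (π*(2*x-1)/3)^2 - 1 + cos (2*π*y/sqrt 3)*cos (π*(2*x-1)/3))) * (-(4*π/sqrt 3)*(sin (π*(2*x-1)/3)*sin (2*π*y/sqrt 3)))).intervalIntegrable _ _)]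
  show -(16*π^2/3)*(sqrt 3)⁻¹*sin (π*(2*x-1)/3)*((2*cos (π*(2*x-1)/3)^2-1)*(sqrt 3/2*π⁻¹)*(1 - cos (2*π*t/sqrt 3)) + cos (π*(2*x-1)/3)*(sqrt 3/4*π⁻¹)*sin (2*π*t/sqrt 3)^2) - (-(16*π^2/3)*(sqrt 3)⁻¹*sin (π*(2*x-1)/3)*((2*cos (π*(2*x-1)/3)^2-1)*(sqrt 3/2*π⁻¹)*(1 - cos (2*π*(0:ℝ)/sqrt 3)) + cos (π*(2*x-1)/3)*(sqrt 3/4*π⁻¹)*sin (2*π*(0:ℝ)/sqrt 3)^2)) = -(16*π^2/3)*(sqrt 3)⁻¹*sin (π*(2*x-1)/3)*((2*cos (π*(2*x-1)/3)^2-1)*(sqrt 3/2*π⁻¹)*(1 - cos (2*π*t/sqrt 3)) + cos (π*(2*x-1)/3)*(sqrt 3/4*π⁻¹)*sin (2*π*t/sqrt 3)^2)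
  norm_num


lemma hasDerivXX (x : ℝ) : HasDerivAt (fun x : ℝ => 16*π^2/9*sqrt 3*((1/256:ℝ)*π⁻¹^2 * (x^0 * cos (π*(2*x-1)/3)^0 * sin (π*(2*x-1)/3)^0 * cos (2*π*x)^2 * sin (2*π*x)^0) + (-7/32:ℝ)*π⁻¹^2 * (x^0 * cos (π*(2*x-1)/3)^0 * sin (π*(2*x-1)/3)^1 * cos (2*π*x)^0 * sin (2*π*x)^1) + (-9/32:ℝ)*π⁻¹^2 * (x^0 * cos (π*(2*x-1)/3)^1 * sin (π*(2*x-1)/3)^0 * cos (2*π*x)^1 * sin (2*π*x)^0) + (-3/128:ℝ)*π⁻¹^2 * (x^0 * cos (π*(2*x-1)/3)^1 * sin (π*(2*x-1)/3)^1 * cos (2*π*x)^1 * sin (2*π*x)^1) + (-63/256:ℝ)*π⁻¹^2 * (x^0 * cos (π*(2*x-1)/3)^2 * sin (π*(2*x-1)/3)^0 * cos (2*π*x)^0 * sin (2*π*x)^0) + (-9/128:ℝ)*π⁻¹^2 * (x^0 * cos (π*(2*x-1)/3)^2 * sin (π*(2*x-1)/3)^0 * cos (2*π*x)^2 * sin (2*π*x)^0)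 + (1/2:ℝ)*π⁻¹^2 * (x^0 * cos (π*(2*x-1)/3)^2 * sin (π*(2*x-1)/3)^1 * cos (2*π*x)^0 * sin (2*π*x)^1) + (9/16:ℝ)*π⁻¹^2 * (x^0 * cos (π*(2*x-1)/3)^4 * sin (π*(2*x-1)/3)^0 * cos (2*π*x)^0 * sin (2*π*x)^0) + (1/4:ℝ)*π⁻¹ * (x^1 * cos (π*(2*x-1)/3)^0 * sin (π*(2*x-1)/3)^1 * cos (2*π*x)^1 * sin (2*π*x)^0) + (-3/4:ℝ)*π⁻¹ * (x^1 * cos (π*(2*x-1)/3)^1 * sin (π*(2*x-1)/3)^0 * cos (2*π*x)^0 * sin (2*π*x)^1) + (-3/8:ℝ)*π⁻¹ * (x^1 * cos (π*(2*x-1)/3)^1 * sin (π*(2*x-1)/3)^1 * cos (2*π*x)^0 * sin (2*π*x)^0) + (-1:ℝ)*π⁻¹ * (x^1 * cos (π*(2*x-1)/3)^2 * sin (π*(2*x-1)/3)^1 * cos (2*π*x)^1 * sin (2*π*x)^0) + (1:ℝ)*π⁻¹ * (x^1 * cos (π*(2*x-1)/3)^3 * sin (π*(2*x-1)/3)^0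 * cos (2*π*x)^0 * sin (2*π*x)^1) + (3/2:ℝ)*π⁻¹ * (x^1 * cos (π*(2*x-1)/3)^3 * sin (π*(2*x-1)/3)^1 * cos (2*π*x)^0 * sin (2*π*x)^0) + (3/8:ℝ) * (x^2 * cos (π*(2*x-1)/3)^0 * sin (π*(2*x-1)/3)^0 * cos (2*π*x)^0 * sin (2*π*x)^0))) (16*π^2/9*((2*cos (π*(2*x-1)/3)^2-1)^2*(sqrt 3*x) + sqrt 3*π⁻¹*((2*cos (π*(2*x-1)/3)^2-1)*cos (π*(2*x-1)/3))*sin (2*π*x) + cos (π*(2*x-1)/3)^2*((sqrt 3*x)/2 + sqrt 3/4*π⁻¹*(sin (2*π*x)*cos (2*π*x))))) x := by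
  have hpP : π * π⁻¹ = 1 := mul_inv_cancel₀ pi_ne_zero
  have hsS : sqrt 3 * (sqrt 3)⁻¹ = 1 := mul_inv_cancel₀ (by positivity)
  have hss : sqrt 3 * sqrt 3 = 3 := Real.mul_self_sqrt (by norm_num)
  have hSS : (sqrt 3)⁻¹ * (sqrt 3)⁻¹ = 1/3 := by rw [← mul_inv, hss]; norm_num
  exact ((((((((((((((((mono ((1/256:ℝ)*π⁻¹^2) 0 0 0 2 0 x).add (mono ((-7/32:ℝ)*π⁻¹^2) 0 0 1 0 1 x)).add (mono ((-9/32:ℝ)*π⁻¹^2) 0 1 0 1 0 x)).add (mono ((-3/128:ℝ)*π⁻¹^2) 0 1 1 1 1 x)).add (mono ((-63/256:ℝ)*π⁻¹^2) 0 2 0 0 0 x)).add (mono ((-9/128:ℝ)*π⁻¹^2) 0 2 0 2 0 x)).add (mono ((1/2:ℝ)*π⁻¹^2) 0 2 1 0 1 x)).add (mono ((9/16:ℝ)*π⁻¹^2) 0 4 0 0 0 x)).add (mono ((1/4:ℝ)*π⁻¹) 1 0 1 1 0 x)).add (mono ((-3/4:ℝ)*π⁻¹) 1 1 0 0 1 x)).add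 (mono ((-3/8:ℝ)*π⁻¹) 1 1 1 0 0 x)).add (mono ((-1:ℝ)*π⁻¹) 1 2 1 1 0 x)).add (mono ((1:ℝ)*π⁻¹) 1 3 0 0 1 x)).add (mono ((3/2:ℝ)*π⁻¹) 1 3 1 0 0 x)).add (mono ((3/8:ℝ)) 2 0 0 0 0 x)).const_mul (16*π^2/9*sqrt 3)).congr_deriv (by linear_combination ((-1/36:ℝ)*π*sqrt 3*cos (2*π*x)*sin (2*π*x) + (1/36:ℝ)*π*sqrt 3*sin (π*(2*x-1)/3)^2*cos (2*π*x)*sin (2*π*x) + (32/27:ℝ)*π*sqrt 3*cos (π*(2*x-1)/3)*sin (2*π*x) + (-1/12:ℝ)*π*sqrt 3*cos (π*(2*x-1)/3)*sin (π*(2*x-1)/3) + (1/12:ℝ)*π*sqrt 3*cos (π*(2*x-1)/3)*sin (π*(2*x-1)/3)*sin (2*π*x)^2 + (1/12:ℝ)*π*sqrt 3*cos (π*(2*x-1)/3)*sin (π*(2*x-1)/3)*cos (2*π*x)^2 + (-32/27:ℝ)*π*sqrt 3*cos (π*(2*x-1)/3)*sin (π*(2*x-1)/3)^2*sin (2*π*x)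 + (1/36:ℝ)*π*sqrt 3*cos (π*(2*x-1)/3)^2*cos (2*π*x)*sin (2*π*x) + (-32/27:ℝ)*π*sqrt 3*cos (π*(2*x-1)/3)^3*sin (2*π*x) + (-1/36:ℝ)*π^2*π⁻¹*sqrt 3*cos (2*π*x)*sin (2*π*x) + (-4/9:ℝ)*π^2*π⁻¹*sqrt 3*sin (π*(2*x-1)/3)*cos (2*π*x) + (1/36:ℝ)*π^2*π⁻¹*sqrt 3*sin (π*(2*x-1)/3)^2*cos (2*π*x)*sin (2*π*x) + (20/27:ℝ)*π^2*π⁻¹*sqrt 3*cos (π*(2*x-1)/3)*sin (2*π*x) + (7/12:ℝ)*π^2*π⁻¹*sqrt 3*cos (π*(2*x-1)/3)*sin (π*(2*x-1)/3) + (1/12:ℝ)*π^2*π⁻¹*sqrt 3*cos (π*(2*x-1)/3)*sin (π*(2*x-1)/3)*sin (2*π*x)^2 + (1/12:ℝ)*π^2*π⁻¹*sqrt 3*cos (π*(2*x-1)/3)*sin (π*(2*x-1)/3)*cos (2*π*x)^2 + (-32/27:ℝ)*π^2*π⁻¹*sqrt 3*cos (π*(2*x-1)/3)*sin (π*(2*x-1)/3)^2*sin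 (2*π*x) + (17/36:ℝ)*π^2*π⁻¹*sqrt 3*cos (π*(2*x-1)/3)^2*cos (2*π*x)*sin (2*π*x) + (16/9:ℝ)*π^2*π⁻¹*sqrt 3*cos (π*(2*x-1)/3)^2*sin (π*(2*x-1)/3)*cos (2*π*x) + (16/27:ℝ)*π^2*π⁻¹*sqrt 3*cos (π*(2*x-1)/3)^3*sin (2*π*x) + (-8/3:ℝ)*π^2*π⁻¹*sqrt 3*cos (π*(2*x-1)/3)^3*sin (π*(2*x-1)/3) + (4/9:ℝ)*x*π^2*sqrt 3*sin (π*(2*x-1)/3)^2 + (-64/27:ℝ)*x*π^2*sqrt 3*cos (π*(2*x-1)/3)*cos (2*π*x) + (64/27:ℝ)*x*π^2*sqrt 3*cos (π*(2*x-1)/3)*sin (π*(2*x-1)/3)^2*cos (2*π*x) + (-4/9:ℝ)*x*π^2*sqrt 3*cos (π*(2*x-1)/3)^2 + (-16/3:ℝ)*x*π^2*sqrt 3*cos (π*(2*x-1)/3)^2*sin (π*(2*x-1)/3)^2 + (64/27:ℝ)*x*π^2*sqrt 3*cos (π*(2*x-1)/3)^3*cos (2*π*x) + (16/9:ℝ)*x*π^2*sqrt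 3*cos (π*(2*x-1)/3)^4) * hpP + ((1/36:ℝ)*π*sqrt 3*cos (2*π*x)*sin (2*π*x) + (-32/27:ℝ)*π*sqrt 3*cos (π*(2*x-1)/3)*sin (2*π*x) + (4/9:ℝ)*x*π^2*sqrt 3 + (64/27:ℝ)*x*π^2*sqrt 3*cos (π*(2*x-1)/3)*cos (2*π*x) + (-16/3:ℝ)*x*π^2*sqrt 3*cos (π*(2*x-1)/3)^2) * (sin_sq_add_cos_sq (π*(2*x-1)/3)) + ((1/12:ℝ)*π*sqrt 3*cos (π*(2*x-1)/3)*sin (π*(2*x-1)/3)) * (sin_sq_add_cos_sq (2*π*x)))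

lemma outerXX : (∫ x in (0:ℝ)..(1/2:ℝ), 16*π^2/9*((2*cos (π*(2*x-1)/3)^2-1)^2*(sqrt 3*x) + sqrt 3*π⁻¹*((2*cos (π*(2*x-1)/3)^2-1)*cos (π*(2*x-1)/3))*sin (2*π*x) + cos (π*(2*x-1)/3)^2*((sqrt 3*x)/2 + sqrt 3/4*π⁻¹*(sin (2*π*x)*cos (2*π*x))))) = sqrt 3*(π^2/6 + 81/64) := by
  have hpP : π * π⁻¹ = 1 := mul_inv_cancel₀ pi_ne_zero
  have hsS : sqrt 3 * (sqrt 3)⁻¹ = 1 := mul_inv_cancel₀ (by positivity)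
  have hss : sqrt 3 * sqrt 3 = 3 := Real.mul_self_sqrt (by norm_num)
  have hSS : (sqrt 3)⁻¹ * (sqrt 3)⁻¹ = 1/3 := by rw [← mul_inv, hss]; norm_num
  rw [intervalIntegral.integral_eq_sub_of_hasDerivAt (fun x _ => hasDerivXX x)
    ((by fun_prop : Continuous fun x : ℝ => 16*π^2/9*((2*cos (π*(2*x-1)/3)^2-1)^2*(sqrt 3*x) + sqrt 3*π⁻¹*((2*cos (π*(2*x-1)/3)^2-1)*cos (π*(2*x-1)/3))*sin (2*π*x) + cos (π*(2*x-1)/3)^2*((sqrt 3*x)/2 + sqrt 3/4*π⁻¹*(sin (2*π*x)*cos (2*π*x))))).intervalIntegrable _ _)]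
  show (16*π^2/9*sqrt 3*((1/256:ℝ)*π⁻¹^2 * ((1/2:ℝ)^0 * cos (π*(2*(1/2:ℝ)-1)/3)^0 * sin (π*(2*(1/2:ℝ)-1)/3)^0 * cos (2*π*(1/2:ℝ))^2 * sin (2*π*(1/2:ℝ))^0) + (-7/32:ℝ)*π⁻¹^2 * ((1/2:ℝ)^0 * cos (π*(2*(1/2:ℝ)-1)/3)^0 * sin (π*(2*(1/2:ℝ)-1)/3)^1 * cos (2*π*(1/2:ℝ))^0 * sin (2*π*(1/2:ℝ))^1) + (-9/32:ℝ)*π⁻¹^2 * ((1/2:ℝ)^0 * cos (π*(2*(1/2:ℝ)-1)/3)^1 * sin (π*(2*(1/2:ℝ)-1)/3)^0 * cos (2*π*(1/2:ℝ))^1 * sin (2*π*(1/2:ℝ))^0) + (-3/128:ℝ)*π⁻¹^2 * ((1/2:ℝ)^0 * cos (π*(2*(1/2:ℝ)-1)/3)^1 * sin (π*(2*(1/2:ℝ)-1)/3)^1 * cos (2*π*(1/2:ℝ))^1 * sin (2*π*(1/2:ℝ))^1) + (-63/256:ℝ)*π⁻¹^2 * ((1/2:ℝ)^0 * cos (π*(2*(1/2:ℝ)-1)/3)^2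 * sin (π*(2*(1/2:ℝ)-1)/3)^0 * cos (2*π*(1/2:ℝ))^0 * sin (2*π*(1/2:ℝ))^0) + (-9/128:ℝ)*π⁻¹^2 * ((1/2:ℝ)^0 * cos (π*(2*(1/2:ℝ)-1)/3)^2 * sin (π*(2*(1/2:ℝ)-1)/3)^0 * cos (2*π*(1/2:ℝ))^2 * sin (2*π*(1/2:ℝ))^0) + (1/2:ℝ)*π⁻¹^2 * ((1/2:ℝ)^0 * cos (π*(2*(1/2:ℝ)-1)/3)^2 * sin (π*(2*(1/2:ℝ)-1)/3)^1 * cos (2*π*(1/2:ℝ))^0 * sin (2*π*(1/2:ℝ))^1) + (9/16:ℝ)*π⁻¹^2 * ((1/2:ℝ)^0 * cos (π*(2*(1/2:ℝ)-1)/3)^4 * sin (π*(2*(1/2:ℝ)-1)/3)^0 * cos (2*π*(1/2:ℝ))^0 * sin (2*π*(1/2:ℝ))^0) + (1/4:ℝ)*π⁻¹ * ((1/2:ℝ)^1 * cos (π*(2*(1/2:ℝ)-1)/3)^0 * sin (π*(2*(1/2:ℝ)-1)/3)^1 * cos (2*π*(1/2:ℝ))^1 * sin (2*π*(1/2:ℝ))^0)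 + (-3/4:ℝ)*π⁻¹ * ((1/2:ℝ)^1 * cos (π*(2*(1/2:ℝ)-1)/3)^1 * sin (π*(2*(1/2:ℝ)-1)/3)^0 * cos (2*π*(1/2:ℝ))^0 * sin (2*π*(1/2:ℝ))^1) + (-3/8:ℝ)*π⁻¹ * ((1/2:ℝ)^1 * cos (π*(2*(1/2:ℝ)-1)/3)^1 * sin (π*(2*(1/2:ℝ)-1)/3)^1 * cos (2*π*(1/2:ℝ))^0 * sin (2*π*(1/2:ℝ))^0) + (-1:ℝ)*π⁻¹ * ((1/2:ℝ)^1 * cos (π*(2*(1/2:ℝ)-1)/3)^2 * sin (π*(2*(1/2:ℝ)-1)/3)^1 * cos (2*π*(1/2:ℝ))^1 * sin (2*π*(1/2:ℝ))^0) + (1:ℝ)*π⁻¹ * ((1/2:ℝ)^1 * cos (π*(2*(1/2:ℝ)-1)/3)^3 * sin (π*(2*(1/2:ℝ)-1)/3)^0 * cos (2*π*(1/2:ℝ))^0 * sin (2*π*(1/2:ℝ))^1) + (3/2:ℝ)*π⁻¹ * ((1/2:ℝ)^1 * cos (π*(2*(1/2:ℝ)-1)/3)^3 * sin (π*(2*(1/2:ℝ)-1)/3)^1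 * cos (2*π*(1/2:ℝ))^0 * sin (2*π*(1/2:ℝ))^0) + (3/8:ℝ) * ((1/2:ℝ)^2 * cos (π*(2*(1/2:ℝ)-1)/3)^0 * sin (π*(2*(1/2:ℝ)-1)/3)^0 * cos (2*π*(1/2:ℝ))^0 * sin (2*π*(1/2:ℝ))^0))) - (16*π^2/9*sqrt 3*((1/256:ℝ)*π⁻¹^2 * ((0:ℝ)^0 * cos (π*(2*(0:ℝ)-1)/3)^0 * sin (π*(2*(0:ℝ)-1)/3)^0 * cos (2*π*(0:ℝ))^2 * sin (2*π*(0:ℝ))^0) + (-7/32:ℝ)*π⁻¹^2 * ((0:ℝ)^0 * cos (π*(2*(0:ℝ)-1)/3)^0 * sin (π*(2*(0:ℝ)-1)/3)^1 * cos (2*π*(0:ℝ))^0 * sin (2*π*(0:ℝ))^1) + (-9/32:ℝ)*π⁻¹^2 * ((0:ℝ)^0 * cos (π*(2*(0:ℝ)-1)/3)^1 * sin (π*(2*(0:ℝ)-1)/3)^0 * cos (2*π*(0:ℝ))^1 * sin (2*π*(0:ℝ))^0) + (-3/128:ℝ)*π⁻¹^2 * ((0:ℝ)^0 * cos (π*(2*(0:ℝ)-1)/3)^1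 * sin (π*(2*(0:ℝ)-1)/3)^1 * cos (2*π*(0:ℝ))^1 * sin (2*π*(0:ℝ))^1) + (-63/256:ℝ)*π⁻¹^2 * ((0:ℝ)^0 * cos (π*(2*(0:ℝ)-1)/3)^2 * sin (π*(2*(0:ℝ)-1)/3)^0 * cos (2*π*(0:ℝ))^0 * sin (2*π*(0:ℝ))^0) + (-9/128:ℝ)*π⁻¹^2 * ((0:ℝ)^0 * cos (π*(2*(0:ℝ)-1)/3)^2 * sin (π*(2*(0:ℝ)-1)/3)^0 * cos (2*π*(0:ℝ))^2 * sin (2*π*(0:ℝ))^0) + (1/2:ℝ)*π⁻¹^2 * ((0:ℝ)^0 * cos (π*(2*(0:ℝ)-1)/3)^2 * sin (π*(2*(0:ℝ)-1)/3)^1 * cos (2*π*(0:ℝ))^0 * sin (2*π*(0:ℝ))^1) + (9/16:ℝ)*π⁻¹^2 * ((0:ℝ)^0 * cos (π*(2*(0:ℝ)-1)/3)^4 * sin (π*(2*(0:ℝ)-1)/3)^0 * cos (2*π*(0:ℝ))^0 * sin (2*π*(0:ℝ))^0) + (1/4:ℝ)*π⁻¹ * ((0:ℝ)^1 * cos (π*(2*(0:ℝ)-1)/3)^0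 * sin (π*(2*(0:ℝ)-1)/3)^1 * cos (2*π*(0:ℝ))^1 * sin (2*π*(0:ℝ))^0) + (-3/4:ℝ)*π⁻¹ * ((0:ℝ)^1 * cos (π*(2*(0:ℝ)-1)/3)^1 * sin (π*(2*(0:ℝ)-1)/3)^0 * cos (2*π*(0:ℝ))^0 * sin (2*π*(0:ℝ))^1) + (-3/8:ℝ)*π⁻¹ * ((0:ℝ)^1 * cos (π*(2*(0:ℝ)-1)/3)^1 * sin (π*(2*(0:ℝ)-1)/3)^1 * cos (2*π*(0:ℝ))^0 * sin (2*π*(0:ℝ))^0) + (-1:ℝ)*π⁻¹ * ((0:ℝ)^1 * cos (π*(2*(0:ℝ)-1)/3)^2 * sin (π*(2*(0:ℝ)-1)/3)^1 * cos (2*π*(0:ℝ))^1 * sin (2*π*(0:ℝ))^0) + (1:ℝ)*π⁻¹ * ((0:ℝ)^1 * cos (π*(2*(0:ℝ)-1)/3)^3 * sin (π*(2*(0:ℝ)-1)/3)^0 * cos (2*π*(0:ℝ))^0 * sin (2*π*(0:ℝ))^1) + (3/2:ℝ)*π⁻¹ * ((0:ℝ)^1 * cos (π*(2*(0:ℝ)-1)/3)^3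 * sin (π*(2*(0:ℝ)-1)/3)^1 * cos (2*π*(0:ℝ))^0 * sin (2*π*(0:ℝ))^0) + (3/8:ℝ) * ((0:ℝ)^2 * cos (π*(2*(0:ℝ)-1)/3)^0 * sin (π*(2*(0:ℝ)-1)/3)^0 * cos (2*π*(0:ℝ))^0 * sin (2*π*(0:ℝ))^0))) = sqrt 3*(π^2/6 + 81/64)
  rw [show π*(2*(1/2:ℝ)-1)/3 = 0 by norm_num, show 2*π*(1/2:ℝ) = π by ring,
    show π*(2*(0:ℝ)-1)/3 = -(π/3) by ring, show 2*π*(0:ℝ) = 0 by ring,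
    Real.cos_zero, Real.sin_zero, Real.cos_pi, Real.sin_pi, Real.cos_neg, Real.sin_neg,
    Real.cos_pi_div_three, Real.sin_pi_div_three]
  linear_combination ((81/64:ℝ)*sqrt 3 + (81/64:ℝ)*π*π⁻¹*sqrt 3) * hpP


lemma hasDerivYY (x : ℝ) : HasDerivAt (fun x : ℝ => 16*π^2/3*sqrt 3*((17/256:ℝ)*π⁻¹^2 * (x^0 * cos (π*(2*x-1)/3)^0 * sin (π*(2*x-1)/3)^0 * cos (2*π*x)^2 * sin (2*π*x)^0) + (-3/128:ℝ)*π⁻¹^2 * (x^0 * cos (π*(2*x-1)/3)^1 * sin (π*(2*x-1)/3)^1 * cos (2*π*x)^1 * sin (2*π*x)^1) + (-63/256:ℝ)*π⁻¹^2 * (x^0 * cos (π*(2*x-1)/3)^2 * sin (π*(2*x-1)/3)^0 * cos (2*π*x)^0 * sin (2*π*x)^0) + (-9/128:ℝ)*π⁻¹^2 * (x^0 * cos (π*(2*x-1)/3)^2 * sin (π*(2*x-1)/3)^0 * cos (2*π*x)^2 * sin (2*π*x)^0) + (-3/8:ℝ)*π⁻¹ * (x^1 * cos (π*(2*x-1)/3)^1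 * sin (π*(2*x-1)/3)^1 * cos (2*π*x)^0 * sin (2*π*x)^0) + (1/8:ℝ) * (x^2 * cos (π*(2*x-1)/3)^0 * sin (π*(2*x-1)/3)^0 * cos (2*π*x)^0 * sin (2*π*x)^0))) (16*π^2/3*sin (π*(2*x-1)/3)^2*((sqrt 3*x)/2 - sqrt 3/4*π⁻¹*(sin (2*π*x)*cos (2*π*x)))) x := by
  have hpP : π * π⁻¹ = 1 := mul_inv_cancel₀ pi_ne_zero
  have hsS : sqrt 3 * (sqrt 3)⁻¹ = 1 := mul_inv_cancel₀ (by positivity)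
  have hss : sqrt 3 * sqrt 3 = 3 := Real.mul_self_sqrt (by norm_num)
  have hSS : (sqrt 3)⁻¹ * (sqrt 3)⁻¹ = 1/3 := by rw [← mul_inv, hss]; norm_num
  exact (((((((mono ((17/256:ℝ)*π⁻¹^2) 0 0 0 2 0 x).add (mono ((-3/128:ℝ)*π⁻¹^2) 0 1 1 1 1 x)).add (mono ((-63/256:ℝ)*π⁻¹^2) 0 2 0 0 0 x)).add (mono ((-9/128:ℝ)*π⁻¹^2) 0 2 0 2 0 x)).add (mono ((-3/8:ℝ)*π⁻¹) 1 1 1 0 0 x)).add (mono ((1/8:ℝ)) 2 0 0 0 0 x)).const_mul (16*π^2/3*sqrt 3)).congr_deriv (by linear_combination ((-17/12:ℝ)*π*sqrt 3*cos (2*π*x)*sin (2*π*x) + (17/12:ℝ)*π*sqrt 3*sin (π*(2*x-1)/3)^2*cos (2*π*x)*sin (2*π*x) + (-1/4:ℝ)*π*sqrt 3*cos (π*(2*x-1)/3)*sin (π*(2*x-1)/3) + (1/4:ℝ)*π*sqrt 3*cos (π*(2*x-1)/3)*sin (π*(2*x-1)/3)*sin (2*π*x)^2 + (1/4:ℝ)*π*sqrt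 3*cos (π*(2*x-1)/3)*sin (π*(2*x-1)/3)*cos (2*π*x)^2 + (17/12:ℝ)*π*sqrt 3*cos (π*(2*x-1)/3)^2*cos (2*π*x)*sin (2*π*x) + (-17/12:ℝ)*π^2*π⁻¹*sqrt 3*cos (2*π*x)*sin (2*π*x) + (1/12:ℝ)*π^2*π⁻¹*sqrt 3*sin (π*(2*x-1)/3)^2*cos (2*π*x)*sin (2*π*x) + (7/4:ℝ)*π^2*π⁻¹*sqrt 3*cos (π*(2*x-1)/3)*sin (π*(2*x-1)/3) + (1/4:ℝ)*π^2*π⁻¹*sqrt 3*cos (π*(2*x-1)/3)*sin (π*(2*x-1)/3)*sin (2*π*x)^2 + (1/4:ℝ)*π^2*π⁻¹*sqrt 3*cos (π*(2*x-1)/3)*sin (π*(2*x-1)/3)*cos (2*π*x)^2 + (17/12:ℝ)*π^2*π⁻¹*sqrt 3*cos (π*(2*x-1)/3)^2*cos (2*π*x)*sin (2*π*x) + (4/3:ℝ)*x*π^2*sqrt 3*sin (π*(2*x-1)/3)^2 + (-4/3:ℝ)*x*π^2*sqrt 3*cos (π*(2*x-1)/3)^2) * hpP + ((17/12:ℝ)*π*sqrt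 3*cos (2*π*x)*sin (2*π*x) + (-4/3:ℝ)*x*π^2*sqrt 3) * (sin_sq_add_cos_sq (π*(2*x-1)/3)) + ((1/4:ℝ)*π*sqrt 3*cos (π*(2*x-1)/3)*sin (π*(2*x-1)/3)) * (sin_sq_add_cos_sq (2*π*x)))

lemma outerYY : (∫ x in (0:ℝ)..(1/2:ℝ), 16*π^2/3*sin (π*(2*x-1)/3)^2*((sqrt 3*x)/2 - sqrt 3/4*π⁻¹*(sin (2*π*x)*cos (2*π*x)))) = sqrt 3*(π^2/6 - 81/64) := by
  have hpP : π * π⁻¹ = 1 := mul_inv_cancel₀ pi_ne_zero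
  have hsS : sqrt 3 * (sqrt 3)⁻¹ = 1 := mul_inv_cancel₀ (by positivity)
  have hss : sqrt 3 * sqrt 3 = 3 := Real.mul_self_sqrt (by norm_num)
  have hSS : (sqrt 3)⁻¹ * (sqrt 3)⁻¹ = 1/3 := by rw [← mul_inv, hss]; norm_num
  rw [intervalIntegral.integral_eq_sub_of_hasDerivAt (fun x _ => hasDerivYY x)
    ((by fun_prop : Continuous fun x : ℝ => 16*π^2/3*sin (π*(2*x-1)/3)^2*((sqrt 3*x)/2 - sqrt 3/4*π⁻¹*(sin (2*π*x)*cos (2*π*x)))).intervalIntegrable _ _)]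
  show (16*π^2/3*sqrt 3*((17/256:ℝ)*π⁻¹^2 * ((1/2:ℝ)^0 * cos (π*(2*(1/2:ℝ)-1)/3)^0 * sin (π*(2*(1/2:ℝ)-1)/3)^0 * cos (2*π*(1/2:ℝ))^2 * sin (2*π*(1/2:ℝ))^0) + (-3/128:ℝ)*π⁻¹^2 * ((1/2:ℝ)^0 * cos (π*(2*(1/2:ℝ)-1)/3)^1 * sin (π*(2*(1/2:ℝ)-1)/3)^1 * cos (2*π*(1/2:ℝ))^1 * sin (2*π*(1/2:ℝ))^1) + (-63/256:ℝ)*π⁻¹^2 * ((1/2:ℝ)^0 * cos (π*(2*(1/2:ℝ)-1)/3)^2 * sin (π*(2*(1/2:ℝ)-1)/3)^0 * cos (2*π*(1/2:ℝ))^0 * sin (2*π*(1/2:ℝ))^0) + (-9/128:ℝ)*π⁻¹^2 * ((1/2:ℝ)^0 * cos (π*(2*(1/2:ℝ)-1)/3)^2 * sin (π*(2*(1/2:ℝ)-1)/3)^0 * cos (2*π*(1/2:ℝ))^2 * sin (2*π*(1/2:ℝ))^0) + (-3/8:ℝ)*π⁻¹ * ((1/2:ℝ)^1 * cos (π*(2*(1/2:ℝ)-1)/3)^1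 * sin (π*(2*(1/2:ℝ)-1)/3)^1 * cos (2*π*(1/2:ℝ))^0 * sin (2*π*(1/2:ℝ))^0) + (1/8:ℝ) * ((1/2:ℝ)^2 * cos (π*(2*(1/2:ℝ)-1)/3)^0 * sin (π*(2*(1/2:ℝ)-1)/3)^0 * cos (2*π*(1/2:ℝ))^0 * sin (2*π*(1/2:ℝ))^0))) - (16*π^2/3*sqrt 3*((17/256:ℝ)*π⁻¹^2 * ((0:ℝ)^0 * cos (π*(2*(0:ℝ)-1)/3)^0 * sin (π*(2*(0:ℝ)-1)/3)^0 * cos (2*π*(0:ℝ))^2 * sin (2*π*(0:ℝ))^0) + (-3/128:ℝ)*π⁻¹^2 * ((0:ℝ)^0 * cos (π*(2*(0:ℝ)-1)/3)^1 * sin (π*(2*(0:ℝ)-1)/3)^1 * cos (2*π*(0:ℝ))^1 * sin (2*π*(0:ℝ))^1) + (-63/256:ℝ)*π⁻¹^2 * ((0:ℝ)^0 * cos (π*(2*(0:ℝ)-1)/3)^2 * sin (π*(2*(0:ℝ)-1)/3)^0 * cos (2*π*(0:ℝ))^0 * sin (2*π*(0:ℝ))^0) + (-9/128:ℝ)*π⁻¹^2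 * ((0:ℝ)^0 * cos (π*(2*(0:ℝ)-1)/3)^2 * sin (π*(2*(0:ℝ)-1)/3)^0 * cos (2*π*(0:ℝ))^2 * sin (2*π*(0:ℝ))^0) + (-3/8:ℝ)*π⁻¹ * ((0:ℝ)^1 * cos (π*(2*(0:ℝ)-1)/3)^1 * sin (π*(2*(0:ℝ)-1)/3)^1 * cos (2*π*(0:ℝ))^0 * sin (2*π*(0:ℝ))^0) + (1/8:ℝ) * ((0:ℝ)^2 * cos (π*(2*(0:ℝ)-1)/3)^0 * sin (π*(2*(0:ℝ)-1)/3)^0 * cos (2*π*(0:ℝ))^0 * sin (2*π*(0:ℝ))^0))) = sqrt 3*(π^2/6 - 81/64)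
  rw [show π*(2*(1/2:ℝ)-1)/3 = 0 by norm_num, show 2*π*(1/2:ℝ) = π by ring,
    show π*(2*(0:ℝ)-1)/3 = -(π/3) by ring, show 2*π*(0:ℝ) = 0 by ring,
    Real.cos_zero, Real.sin_zero, Real.cos_pi, Real.sin_pi, Real.cos_neg, Real.sin_neg,
    Real.cos_pi_div_three, Real.sin_pi_div_three]
  linear_combination ((-81/64:ℝ)*sqrt 3 + (-81/64:ℝ)*π*π⁻¹*sqrt 3) * hpP


end

open MeasureTheory Real

/-- Over the equilateral triangle `E` with vertices `(0,0)`, `(1,0)`, `(1/2,√3/2)`: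
`∫_E (∂u₁/∂x)² = (32π²+243)/(32√3)`, `∫_E (∂u₁/∂y)² = (32π²−243)/(32√3)` and
`∫_E (∂u₁/∂x)(∂u₁/∂y) = 0`. -/
theorem stmt_14 (u₁ : ℝ → ℝ → ℝ)
    (hu₁ : ∀ x y, u₁ x y =
      2 * (cos (π * (2 * x - 1) / 3) + cos (2 * π * y / sqrt 3)) * sin (π * (2 * x - 1) / 3))
    (E : Set (ℝ × ℝ))
    (hE : E = convexHull ℝ {((0 : ℝ), (0 : ℝ)), (1, 0), (1 / 2, sqrt 3 / 2)}) :
    (∫ p in E, (deriv (fun t => u₁ t p.2) p.1) ^ 2) = (32 * π ^ 2 + 243) / (32 * sqrt 3) ∧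
    (∫ p in E, (deriv (fun s => u₁ p.1 s) p.2) ^ 2) = (32 * π ^ 2 - 243) / (32 * sqrt 3) ∧
    (∫ p in E, deriv (fun t => u₁ t p.2) p.1 * deriv (fun s => u₁ p.1 s) p.2) = 0 := by
  refine ⟨?_, ?_, ?_⟩
  · rw [hE, hull_eq]
    simp only [hu₁, derivX, derivY]
    refine ((reduce (fun x y => (4*π/3*(2*cos (π*(2*x-1)/3)^2 - 1 + cos (2*π*y/sqrt 3)*cos (π*(2*x-1)/3)))^2) (fun x t => 16*π^2/9*((2*cos (π*(2*x-1)/3)^2-1)^2*t + sqrt 3*π⁻¹*((2*cos (π*(2*x-1)/3)^2-1)*cos (π*(2*x-1)/3))*sin (2*π*t/sqrt 3) + cos (π*(2*x-1)/3)^2*(t/2 + sqrt 3/4*π⁻¹*(sin (2*π*t/sqrt 3)*cos (2*π*t/sqrt 3)))))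
      (by fun_prop) (fun x t => ftcXX x t) (by fun_prop)).trans ?_)
    show (∫ x in (0:ℝ)..(1/2:ℝ), 16*π^2/9*((2*cos (π*(2*x-1)/3)^2-1)^2*(sqrt 3*x) + sqrt 3*π⁻¹*((2*cos (π*(2*x-1)/3)^2-1)*cos (π*(2*x-1)/3))*sin (2*π*(sqrt 3*x)/sqrt 3) + cos (π*(2*x-1)/3)^2*((sqrt 3*x)/2 + sqrt 3/4*π⁻¹*(sin (2*π*(sqrt 3*x)/sqrt 3)*cos (2*π*(sqrt 3*x)/sqrt 3))))) + (∫ x in (0:ℝ)..(1/2:ℝ), 16*π^2/9*((2*cos (π*(2*(1-x)-1)/3)^2-1)^2*(sqrt 3*x) + sqrt 3*π⁻¹*((2*cos (π*(2*(1-x)-1)/3)^2-1)*cos (π*(2*(1-x)-1)/3))*sin (2*π*(sqrt 3*x)/sqrt 3) + cos (π*(2*(1-x)-1)/3)^2*((sqrt 3*x)/2 + sqrt 3/4*π⁻¹*(sin (2*π*(sqrt 3*x)/sqrt 3)*cos (2*π*(sqrt 3*x)/sqrt 3))))) = (32 * π ^ 2 + 243) / (32 * sqrt 3)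
    have hsym : (fun x : ℝ => 16*π^2/9*((2*cos (π*(2*(1-x)-1)/3)^2-1)^2*(sqrt 3*x) + sqrt 3*π⁻¹*((2*cos (π*(2*(1-x)-1)/3)^2-1)*cos (π*(2*(1-x)-1)/3))*sin (2*π*(sqrt 3*x)/sqrt 3) + cos (π*(2*(1-x)-1)/3)^2*((sqrt 3*x)/2 + sqrt 3/4*π⁻¹*(sin (2*π*(sqrt 3*x)/sqrt 3)*cos (2*π*(sqrt 3*x)/sqrt 3))))) = (fun x : ℝ => 16*π^2/9*((2*cos (π*(2*x-1)/3)^2-1)^2*(sqrt 3*x) + sqrt 3*π⁻¹*((2*cos (π*(2*x-1)/3)^2-1)*cos (π*(2*x-1)/3))*sin (2*π*(sqrt 3*x)/sqrt 3) + cos (π*(2*x-1)/3)^2*((sqrt 3*x)/2 + sqrt 3/4*π⁻¹*(sin (2*π*(sqrt 3*x)/sqrt 3)*cos (2*π*(sqrt 3*x)/sqrt 3))))) := by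
      funext x
      rw [show π*(2*(1-x)-1)/3 = -(π*(2*x-1)/3) from by ring, Real.cos_neg]
    have hpsi : (fun x : ℝ => 16*π^2/9*((2*cos (π*(2*x-1)/3)^2-1)^2*(sqrt 3*x) + sqrt 3*π⁻¹*((2*cos (π*(2*x-1)/3)^2-1)*cos (π*(2*x-1)/3))*sin (2*π*(sqrt 3*x)/sqrt 3) + cos (π*(2*x-1)/3)^2*((sqrt 3*x)/2 + sqrt 3/4*π⁻¹*(sin (2*π*(sqrt 3*x)/sqrt 3)*cos (2*π*(sqrt 3*x)/sqrt 3))))) = (fun x : ℝ => 16*π^2/9*((2*cos (π*(2*x-1)/3)^2-1)^2*(sqrt 3*x) + sqrt 3*π⁻¹*((2*cos (π*(2*x-1)/3)^2-1)*cos (π*(2*x-1)/3))*sin (2*π*x) + cos (π*(2*x-1)/3)^2*((sqrt 3*x)/2 + sqrt 3/4*π⁻¹*(sin (2*π*x)*cos (2*π*x))))) := by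
      funext x
      rw [show 2*π*(sqrt 3*x)/sqrt 3 = 2*π*x from (div_eq_iff (by positivity : (sqrt 3:ℝ) ≠ 0)).mpr (by ring)]
    rw [hsym, hpsi, outerXX]
    have hss : sqrt 3 * sqrt 3 = 3 := Real.mul_self_sqrt (by norm_num)
    rw [eq_div_iff (by positivity : (32*sqrt 3:ℝ) ≠ 0)]
    linear_combination (64*(π^2/6 + 81/64)) * hss
  · rw [hE, hull_eq]
    simp only [hu₁, derivX, derivY]
    refine ((reduce (fun x y => (-(4*π/sqrt 3)*(sin (π*(2*x-1)/3)*sin (2*π*y/sqrt 3)))^2) (fun x t => 16*π^2/3*sin (π*(2*x-1)/3)^2*(t/2 - sqrt 3/4*π⁻¹*(sin (2*π*t/sqrt 3)*cos (2*π*t/sqrt 3))))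
      (by fun_prop) (fun x t => ftcYY x t) (by fun_prop)).trans ?_)
    show (∫ x in (0:ℝ)..(1/2:ℝ), 16*π^2/3*sin (π*(2*x-1)/3)^2*((sqrt 3*x)/2 - sqrt 3/4*π⁻¹*(sin (2*π*(sqrt 3*x)/sqrt 3)*cos (2*π*(sqrt 3*x)/sqrt 3)))) + (∫ x in (0:ℝ)..(1/2:ℝ), 16*π^2/3*sin (π*(2*(1-x)-1)/3)^2*((sqrt 3*x)/2 - sqrt 3/4*π⁻¹*(sin (2*π*(sqrt 3*x)/sqrt 3)*cos (2*π*(sqrt 3*x)/sqrt 3)))) = (32 * π ^ 2 - 243) / (32 * sqrt 3)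
    have hsym : (fun x : ℝ => 16*π^2/3*sin (π*(2*(1-x)-1)/3)^2*((sqrt 3*x)/2 - sqrt 3/4*π⁻¹*(sin (2*π*(sqrt 3*x)/sqrt 3)*cos (2*π*(sqrt 3*x)/sqrt 3)))) = (fun x : ℝ => 16*π^2/3*sin (π*(2*x-1)/3)^2*((sqrt 3*x)/2 - sqrt 3/4*π⁻¹*(sin (2*π*(sqrt 3*x)/sqrt 3)*cos (2*π*(sqrt 3*x)/sqrt 3)))) := by
      funext x
      rw [show π*(2*(1-x)-1)/3 = -(π*(2*x-1)/3) from by ring, Real.sin_neg]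
      ring
    have hpsi : (fun x : ℝ => 16*π^2/3*sin (π*(2*x-1)/3)^2*((sqrt 3*x)/2 - sqrt 3/4*π⁻¹*(sin (2*π*(sqrt 3*x)/sqrt 3)*cos (2*π*(sqrt 3*x)/sqrt 3)))) = (fun x : ℝ => 16*π^2/3*sin (π*(2*x-1)/3)^2*((sqrt 3*x)/2 - sqrt 3/4*π⁻¹*(sin (2*π*x)*cos (2*π*x)))) := by
      funext x
      rw [show 2*π*(sqrt 3*x)/sqrt 3 = 2*π*x from (div_eq_iff (by positivity : (sqrt 3:ℝ) ≠ 0)).mpr (by ring)]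
    rw [hsym, hpsi, outerYY]
    have hss : sqrt 3 * sqrt 3 = 3 := Real.mul_self_sqrt (by norm_num)
    rw [eq_div_iff (by positivity : (32*sqrt 3:ℝ) ≠ 0)]
    linear_combination (64*(π^2/6 - 81/64)) * hss
  · rw [hE, hull_eq]
    simp only [hu₁, derivX, derivY]
    refine ((reduce (fun x y => (4*π/3*(2*cos (π*(2*x-1)/3)^2 - 1 + cos (2*π*y/sqrt 3)*cos (π*(2*x-1)/3))) * (-(4*π/sqrt 3)*(sin (π*(2*x-1)/3)*sin (2*π*y/sqrt 3)))) (fun x t => -(16*π^2/3)*(sqrt 3)⁻¹*sin (π*(2*x-1)/3)*((2*cos (π*(2*x-1)/3)^2-1)*(sqrt 3/2*π⁻¹)*(1 - cos (2*π*t/sqrt 3)) + cos (π*(2*x-1)/3)*(sqrt 3/4*π⁻¹)*sin (2*π*t/sqrt 3)^2))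
      (by fun_prop) (fun x t => ftcXY x t) (by fun_prop)).trans ?_)
    show (∫ x in (0:ℝ)..(1/2:ℝ), -(16*π^2/3)*(sqrt 3)⁻¹*sin (π*(2*x-1)/3)*((2*cos (π*(2*x-1)/3)^2-1)*(sqrt 3/2*π⁻¹)*(1 - cos (2*π*(sqrt 3*x)/sqrt 3)) + cos (π*(2*x-1)/3)*(sqrt 3/4*π⁻¹)*sin (2*π*(sqrt 3*x)/sqrt 3)^2)) + (∫ x in (0:ℝ)..(1/2:ℝ), -(16*π^2/3)*(sqrt 3)⁻¹*sin (π*(2*(1-x)-1)/3)*((2*cos (π*(2*(1-x)-1)/3)^2-1)*(sqrt 3/2*π⁻¹)*(1 - cos (2*π*(sqrt 3*x)/sqrt 3)) + cos (π*(2*(1-x)-1)/3)*(sqrt 3/4*π⁻¹)*sin (2*π*(sqrt 3*x)/sqrt 3)^2)) = (0:ℝ)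
    have hsym : (fun x : ℝ => -(16*π^2/3)*(sqrt 3)⁻¹*sin (π*(2*(1-x)-1)/3)*((2*cos (π*(2*(1-x)-1)/3)^2-1)*(sqrt 3/2*π⁻¹)*(1 - cos (2*π*(sqrt 3*x)/sqrt 3)) + cos (π*(2*(1-x)-1)/3)*(sqrt 3/4*π⁻¹)*sin (2*π*(sqrt 3*x)/sqrt 3)^2)) = (fun x : ℝ => -(-(16*π^2/3)*(sqrt 3)⁻¹*sin (π*(2*x-1)/3)*((2*cos (π*(2*x-1)/3)^2-1)*(sqrt 3/2*π⁻¹)*(1 - cos (2*π*(sqrt 3*x)/sqrt 3)) + cos (π*(2*x-1)/3)*(sqrt 3/4*π⁻¹)*sin (2*π*(sqrt 3*x)/sqrt 3)^2))) := by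
      funext x
      rw [show π*(2*(1-x)-1)/3 = -(π*(2*x-1)/3) from by ring, Real.cos_neg, Real.sin_neg]
      ring
    rw [hsym, intervalIntegral.integral_neg]
    exact add_neg_cancel _
end

section
/- For the equilateral triangle E with vertices (0,0), (1,0), (1/2,√3/2), the functions u₁(x,y) = 2[cos(π(2x−1)/3) + cos(2πy/√3)]·sin(π(2x−1)/3) and u₂(x,y) = cos(2π(2x−1)/3) − 2cos(π(2x−1)/3)cos(2πy/√3) satisfy the orthogonality relations ∫_E u₁ u₂ dA = 0, ∫_E (∂u₁/∂x)(∂u₂/∂x) dA = 0, and ∫_E (∂u₁/∂y)(∂u₂/∂y) dA = 0. -/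
open MeasureTheory Real

/-- The reflection `(x, y) ↦ (1 - x, y)` as a measurable equivalence of `ℝ × ℝ`. -/
noncomputable def reflT : (ℝ × ℝ) ≃ᵐ (ℝ × ℝ) where
  toFun p := (1 - p.1, p.2)
  invFun p := (1 - p.1, p.2)
  left_inv p := by ext <;> simp
  right_inv p := by ext <;> simp
  measurable_toFun := by
    show Measurable fun p : ℝ × ℝ => ((1 : ℝ) - p.1, p.2)
    fun_prop
  measurable_invFun := by
    show Measurable fun p : ℝ × ℝ => ((1 : ℝ) - p.1, p.2)
    fun_prop

lemma reflT_measurePreserving :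
    MeasurePreserving (fun p : ℝ × ℝ => ((1 : ℝ) - p.1, p.2)) volume volume := by
  have h1 : MeasurePreserving (fun x : ℝ => 1 - x) volume volume :=
    Measure.measurePreserving_sub_left volume 1
  have h2 := h1.prod (MeasurePreserving.id (volume : Measure ℝ))
  rw [Measure.volume_eq_prod]
  exact h2

/-- The reflection as an affine map. -/
noncomputable def reflA : (ℝ × ℝ) →ᵃ[ℝ] (ℝ × ℝ) :=
  AffineMap.mk' (fun p => (1 - p.1, p.2))
    (LinearMap.prodMap (-LinearMap.id) LinearMap.id) ((0 : ℝ), (0 : ℝ))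
    (by intro p; ext <;> simp <;> ring)

lemma refl_preimage_E (E : Set (ℝ × ℝ))
    (hE : E = convexHull ℝ {((0 : ℝ), (0 : ℝ)), (1, 0), (1 / 2, sqrt 3 / 2)}) :
    (fun p : ℝ × ℝ => ((1 : ℝ) - p.1, p.2)) ⁻¹' E = E := by
  have hA : ∀ p : ℝ × ℝ, reflA p = (1 - p.1, p.2) := by
    intro p; simp [reflA]
  have himg : reflA '' E = E := by
    rw [hE, AffineMap.image_convexHull]
    congr 1
    ext p
    simp only [Set.image_insert_eq, Set.image_singleton, hA]
    norm_num
    tauto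
  have hinv : ∀ p : ℝ × ℝ, ((1 : ℝ) - (1 - p.1), p.2) = p := by
    intro p; ext <;> simp
  ext p
  constructor
  · intro hp
    have : reflA ((1 : ℝ) - p.1, p.2) ∈ reflA '' E := Set.mem_image_of_mem _ hp
    rw [himg] at this
    rwa [hA, hinv] at this
  · intro hp
    have : reflA p ∈ reflA '' E := Set.mem_image_of_mem _ hp
    rw [himg, hA] at this
    exact this

/-- Main symmetry lemma: an integrand odd under `(x,y) ↦ (1-x,y)` integrates to `0` over `E`. -/
lemma refl_integral_zero (f : ℝ × ℝ → ℝ) (E : Set (ℝ × ℝ))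
    (hE : E = convexHull ℝ {((0 : ℝ), (0 : ℝ)), (1, 0), (1 / 2, sqrt 3 / 2)})
    (hf : ∀ p : ℝ × ℝ, f (1 - p.1, p.2) = - f p) :
    (∫ p in E, f p) = 0 := by
  have hemb : MeasurableEmbedding (fun p : ℝ × ℝ => ((1 : ℝ) - p.1, p.2)) :=
    reflT.measurableEmbedding
  have key := reflT_measurePreserving.setIntegral_preimage_emb hemb f E
  rw [refl_preimage_E E hE] at key
  simp only [hf, integral_neg] at key
  linarith

/-- Orthogonality relations between `u₁`, `u₂` and their matching partial derivatives
over the equilateral triangle `E` with vertices `(0,0)`, `(1,0)`, `(1/2,√3/2)`. -/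
theorem stmt_15 (u₁ u₂ : ℝ → ℝ → ℝ)
    (hu₁ : ∀ x y, u₁ x y =
      2 * (cos (π * (2 * x - 1) / 3) + cos (2 * π * y / sqrt 3)) * sin (π * (2 * x - 1) / 3))
    (hu₂ : ∀ x y, u₂ x y =
      cos (2 * π * (2 * x - 1) / 3) - 2 * cos (π * (2 * x - 1) / 3) * cos (2 * π * y / sqrt 3))
    (E : Set (ℝ × ℝ))
    (hE : E = convexHull ℝ {((0 : ℝ), (0 : ℝ)), (1, 0), (1 / 2, sqrt 3 / 2)}) :
    (∫ p in E, u₁ p.1 p.2 * u₂ p.1 p.2) = 0 ∧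
    (∫ p in E, deriv (fun t => u₁ t p.2) p.1 * deriv (fun t => u₂ t p.2) p.1) = 0 ∧
    (∫ p in E, deriv (fun s => u₁ p.1 s) p.2 * deriv (fun s => u₂ p.1 s) p.2) = 0 := by
  have hodd : ∀ x y, u₁ (1 - x) y = - u₁ x y := by
    intro x y
    rw [hu₁, hu₁]
    have e : π * (2 * (1 - x) - 1) / 3 = -(π * (2 * x - 1) / 3) := by ring
    rw [e, cos_neg, sin_neg]
    ring
  have heven : ∀ x y, u₂ (1 - x) y = u₂ x y := by
    intro x y
    rw [hu₂, hu₂]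
    have e : π * (2 * (1 - x) - 1) / 3 = -(π * (2 * x - 1) / 3) := by ring
    have e2 : 2 * π * (2 * (1 - x) - 1) / 3 = -(2 * π * (2 * x - 1) / 3) := by ring
    rw [e, e2, cos_neg, cos_neg]
  refine ⟨?_, ?_, ?_⟩
  · refine refl_integral_zero _ E hE ?_
    intro p
    simp only [hodd, heven]
    ring
  · refine refl_integral_zero _ E hE ?_
    rintro ⟨x, y⟩
    simp only
    have h1 : deriv (fun t => u₁ t y) (1 - x) = deriv (fun t => u₁ t y) x := by
      have hg : (fun t => u₁ (1 - t) y) = fun t => - u₁ t y := funext fun t => hodd t y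
      have := congrArg (fun g => deriv g x) hg
      rw [deriv_comp_const_sub (fun t => u₁ t y) 1 x, deriv.fun_neg] at this
      linarith
    have h2 : deriv (fun t => u₂ t y) (1 - x) = - deriv (fun t => u₂ t y) x := by
      have hg : (fun t => u₂ (1 - t) y) = fun t => u₂ t y := funext fun t => heven t y
      have := congrArg (fun g => deriv g x) hg
      rw [deriv_comp_const_sub (fun t => u₂ t y) 1 x] at this
      linarith
    rw [h1, h2]
    ring
  · refine refl_integral_zero _ E hE ?_
    rintro ⟨x, y⟩
    simp only
    have h1 : (fun s => u₁ (1 - x) s) = fun s => - u₁ x s := funext fun s => hodd x s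
    have h2 : (fun s => u₂ (1 - x) s) = fun s => u₂ x s := funext fun s => heven x s
    rw [h1, h2, deriv.fun_neg]
    ring
end

section
/- Let T be the triangle with vertices (−1,0), (1,0), (a,b), where a, b are real with b > 0, and let f₁(x,y) = x − a/3 and f₂(x,y) = (x − a/3)² − (3 + a²)/18. Then ∫_T f₂ dA = 0, ∫_T ∇f₁·∇f₂ dA = 0, and the Rayleigh quotient of f₂ over T equals 360/(7(3 + a²)), i.e. 7(3 + a²)·∫_T |∇f₂|² dA = 360·∫_T f₂² dA with ∫_T f₂² dA > 0. -/
open MeasureTheory Real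

set_option maxHeartbeats 1000000

private lemma hull_eq' (a b : ℝ) (hb : 0 < b) :
    convexHull ℝ {((-1 : ℝ), (0 : ℝ)), (1, 0), (a, b)} =
    {p : ℝ × ℝ | p.2 ∈ Set.Icc 0 b ∧
      p.1 ∈ Set.Icc (-1 + (a + 1) * (p.2 / b)) (1 + (a - 1) * (p.2 / b))} := by
  have hbne : b ≠ 0 := hb.ne'
  have hset : ({((-1 : ℝ), (0 : ℝ)), (1, 0), (a, b)} : Set (ℝ × ℝ))
      = insert (a, b) {((-1 : ℝ), (0 : ℝ)), (1, 0)} := by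
    ext p; simp; tauto
  rw [hset, convexHull_insert ⟨_, Set.mem_insert _ _⟩, convexHull_pair]
  ext ⟨x, y⟩
  simp only [mem_convexJoin, Set.mem_singleton_iff, Set.mem_setOf_eq, Set.mem_Icc,
    exists_eq_left]
  constructor
  · rintro ⟨z, hz, hxy⟩
    obtain ⟨s₁, s₂, hs₁, hs₂, hs, rfl⟩ := hz
    obtain ⟨u, v, hu, hv, huv, he⟩ := hxy
    simp only [Prod.smul_mk, smul_eq_mul, Prod.mk_add_mk, Prod.mk.injEq] at he
    obtain ⟨hex, hey⟩ := he
    have hyu : y / b = u := by rw [← hey]; field_simp; ring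
    rw [hyu]
    refine ⟨⟨?_, ?_⟩, ?_, ?_⟩
    · nlinarith
    · nlinarith
    · nlinarith [mul_nonneg hv hs₂]
    · nlinarith [mul_nonneg hv hs₁]
  · rintro ⟨⟨hy0, hyb⟩, hxl, hxr⟩
    set u := y / b with hu_def
    have hu0 : 0 ≤ u := div_nonneg hy0 hb.le
    have hu1 : u ≤ 1 := (div_le_one hb).2 hyb
    have hub : u * b = y := div_mul_cancel₀ y hbne
    by_cases h1 : u = 1
    · have hxa : x = a := by rw [h1] at hxl hxr; linarith
      refine ⟨(0, 0), ⟨1/2, 1/2, by norm_num, by norm_num, by norm_num, by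
        simp [Prod.smul_mk]⟩, 1, 0, by norm_num, le_refl 0, by norm_num, ?_⟩
      have hyb' : y = b := by rw [← hub, h1, one_mul]
      simp [hxa, hyb']
    · have hult : u < 1 := lt_of_le_of_ne hu1 h1
      have hv : (0:ℝ) < 1 - u := by linarith
      set z₁ := (x - u * a) / (1 - u) with hz₁
      have hz₁l : -1 ≤ z₁ := by
        rw [hz₁, le_div_iff₀ hv]; nlinarith
      have hz₁r : z₁ ≤ 1 := by
        rw [hz₁, div_le_iff₀ hv]; nlinarith
      refine ⟨(z₁, 0), ⟨(1 - z₁)/2, (1 + z₁)/2, by linarith, by linarith, by ring, by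
        simp [Prod.smul_mk]; ring⟩, u, 1 - u, hu0, by linarith, by ring, ?_⟩
      simp only [Prod.smul_mk, smul_eq_mul, Prod.mk_add_mk, Prod.mk.injEq]
      constructor
      · rw [hz₁]; field_simp; ring
      · rw [hub]; ring_nf

private lemma slice_int' (a b : ℝ) (hb : 0 < b) (g : ℝ → ℝ) (hg : Continuous g) :
    (∫ p in convexHull ℝ {((-1 : ℝ), (0 : ℝ)), (1, 0), (a, b)}, g p.1) =
    ∫ y in (0:ℝ)..b, ∫ x in (-1 + (a + 1) * (y / b))..(1 + (a - 1) * (y / b)), g x := by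
  set T := convexHull ℝ {((-1 : ℝ), (0 : ℝ)), (1, 0), (a, b)} with hTdef
  have hcomp : IsCompact T := (Set.toFinite _).isCompact_convexHull ℝ
  have hmeas : MeasurableSet T := hcomp.isClosed.measurableSet
  have hint : IntegrableOn (fun p : ℝ × ℝ => g p.1) T :=
    (hg.comp continuous_fst).continuousOn.integrableOn_compact hcomp
  rw [← integral_indicator hmeas]
  have hint' : Integrable (T.indicator fun p : ℝ × ℝ => g p.1) :=
    (integrable_indicator_iff hmeas).2 hint
  rw [Measure.volume_eq_prod] at hint' ⊢
  rw [integral_prod_symm _ hint']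
  have key : ∀ y : ℝ,
      (∫ x : ℝ, T.indicator (fun p : ℝ × ℝ => g p.1) (x, y)) =
      (Set.Icc (0:ℝ) b).indicator
        (fun y => ∫ x in Set.Icc (-1 + (a + 1) * (y / b)) (1 + (a - 1) * (y / b)), g x) y := by
    intro y
    by_cases hy : y ∈ Set.Icc (0:ℝ) b
    · rw [Set.indicator_of_mem hy]
      have : (fun x => T.indicator (fun p : ℝ × ℝ => g p.1) (x, y)) =
          (Set.Icc (-1 + (a + 1) * (y / b)) (1 + (a - 1) * (y / b))).indicator g := by
        funext x
        by_cases hx : x ∈ Set.Icc (-1 + (a + 1) * (y / b)) (1 + (a - 1) * (y / b))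
        · rw [Set.indicator_of_mem hx,
            Set.indicator_of_mem (by rw [hTdef, hull_eq' a b hb]; exact ⟨hy, hx⟩)]
        · rw [Set.indicator_of_notMem hx, Set.indicator_of_notMem (by
            rw [hTdef, hull_eq' a b hb]; exact fun h => hx h.2)]
      rw [this, integral_indicator measurableSet_Icc]
    · rw [Set.indicator_of_notMem hy]
      have : (fun x => T.indicator (fun p : ℝ × ℝ => g p.1) (x, y)) = fun _ => (0:ℝ) := by
        funext x
        exact Set.indicator_of_notMem (by
          rw [hTdef, hull_eq' a b hb]; exact fun h => hy h.1) _
      rw [this, integral_zero]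
  rw [funext key, integral_indicator measurableSet_Icc]
  rw [integral_Icc_eq_integral_Ioc, ← intervalIntegral.integral_of_le hb.le]
  apply intervalIntegral.integral_congr
  intro y hy
  rw [Set.uIcc_of_le hb.le] at hy
  have hle : -1 + (a + 1) * (y / b) ≤ 1 + (a - 1) * (y / b) := by
    have h1 : y / b ≤ 1 := (div_le_one hb).2 hy.2
    nlinarith
  dsimp only
  rw [intervalIntegral.integral_of_le hle, integral_Icc_eq_integral_Ioc]

private lemma intpoly' (c₀ c₁ c₂ c₃ c₄ c₅ B : ℝ) :
    (∫ y in (0:ℝ)..B, (c₀ + c₁*y + c₂*y^2 + c₃*y^3 + c₄*y^4 + c₅*y^5)) =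
    c₀*B + c₁*B^2/2 + c₂*B^3/3 + c₃*B^4/4 + c₄*B^5/5 + c₅*B^6/6 := by
  have hF : ∀ y : ℝ, HasDerivAt
      (fun y => c₀*y + c₁/2*y^2 + c₂/3*y^3 + c₃/4*y^4 + c₄/5*y^5 + c₅/6*y^6)
      (c₀ + c₁*y + c₂*y^2 + c₃*y^3 + c₄*y^4 + c₅*y^5) y := by
    intro y
    have h := ((((((hasDerivAt_id y).const_mul c₀).add
      ((hasDerivAt_pow 2 y).const_mul (c₁/2))).add
      ((hasDerivAt_pow 3 y).const_mul (c₂/3))).add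
      ((hasDerivAt_pow 4 y).const_mul (c₃/4))).add
      ((hasDerivAt_pow 5 y).const_mul (c₄/5))).add
      ((hasDerivAt_pow 6 y).const_mul (c₅/6))
    refine h.congr_deriv ?_
    push_cast; ring
  have hc : Continuous fun y : ℝ => c₀ + c₁*y + c₂*y^2 + c₃*y^3 + c₄*y^4 + c₅*y^5 := by
    fun_prop
  rw [intervalIntegral.integral_eq_sub_of_hasDerivAt (fun y _ => hF y)
    (hc.intervalIntegrable 0 B)]
  ring

private lemma comp_int (a b : ℝ) (hb : 0 < b) (g G : ℝ → ℝ) (hg : Continuous g)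
    (hG : ∀ x, HasDerivAt G (g x) x) (c₀ c₁ c₂ c₃ c₄ c₅ : ℝ)
    (hpoly : ∀ y : ℝ, G (1 + (a - 1) * (y / b)) - G (-1 + (a + 1) * (y / b)) =
      c₀ + c₁*y + c₂*y^2 + c₃*y^3 + c₄*y^4 + c₅*y^5) :
    (∫ p in convexHull ℝ {((-1 : ℝ), (0 : ℝ)), (1, 0), (a, b)}, g p.1) =
    c₀*b + c₁*b^2/2 + c₂*b^3/3 + c₃*b^4/4 + c₄*b^5/5 + c₅*b^6/6 := by
  rw [slice_int' a b hb g hg]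
  rw [intervalIntegral.integral_congr (g := fun y =>
      c₀ + c₁*y + c₂*y^2 + c₃*y^3 + c₄*y^4 + c₅*y^5) (fun y _ => by
    dsimp only
    rw [intervalIntegral.integral_eq_sub_of_hasDerivAt (fun x _ => hG x)
      (hg.intervalIntegrable _ _)]
    exact hpoly y)]
  exact intpoly' c₀ c₁ c₂ c₃ c₄ c₅ b

/-- For the triangle `T` with vertices `(−1,0)`, `(1,0)`, `(a,b)` (`b > 0`) and the
trial functions `f₁(x,y) = x − a/3`, `f₂(x,y) = (x − a/3)² − (3+a²)/18`:
`∫_T f₂ = 0`, `∫_T ∇f₁·∇f₂ = 0`, and the Rayleigh quotient of `f₂` equals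
`360/(7(3+a²))`, i.e. `7(3+a²)∫_T |∇f₂|² = 360 ∫_T f₂²` with `∫_T f₂² > 0`. -/
theorem stmt_18 (a b : ℝ) (hb : 0 < b)
    (T : Set (ℝ × ℝ))
    (hT : T = convexHull ℝ {((-1 : ℝ), (0 : ℝ)), (1, 0), (a, b)})
    (f₁ f₂ : ℝ → ℝ → ℝ)
    (hf₁ : ∀ x y, f₁ x y = x - a / 3)
    (hf₂ : ∀ x y, f₂ x y = (x - a / 3) ^ 2 - (3 + a ^ 2) / 18) :
    (∫ p in T, f₂ p.1 p.2) = 0 ∧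
    (∫ p in T, (deriv (fun t => f₁ t p.2) p.1 * deriv (fun t => f₂ t p.2) p.1
        + deriv (fun s => f₁ p.1 s) p.2 * deriv (fun s => f₂ p.1 s) p.2)) = 0 ∧
    7 * (3 + a ^ 2) *
        (∫ p in T, ((deriv (fun t => f₂ t p.2) p.1) ^ 2 + (deriv (fun s => f₂ p.1 s) p.2) ^ 2))
      = 360 * ∫ p in T, (f₂ p.1 p.2) ^ 2 ∧
    (0 < ∫ p in T, (f₂ p.1 p.2) ^ 2) := by
  have hbne : b ≠ 0 := hb.ne'
  subst hT
  -- pointwise derivative facts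
  have dA : ∀ x : ℝ, deriv (fun t : ℝ => t - a / 3) x = 1 := fun x => by
    simpa using ((hasDerivAt_id x).sub_const (a / 3)).deriv
  have dB : ∀ x : ℝ, deriv (fun t : ℝ => (t - a / 3) ^ 2 - (3 + a ^ 2) / 18) x
      = 2 * (x - a / 3) := fun x => by
    have h := (((hasDerivAt_id x).sub_const (a / 3)).pow 2).sub_const ((3 + a ^ 2) / 18)
    simpa using h.deriv
  -- the four integral values
  have V1 : (∫ p in convexHull ℝ {((-1 : ℝ), (0 : ℝ)), (1, 0), (a, b)},
      ((p.1 - a / 3) ^ 2 - (3 + a ^ 2) / 18)) =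
      (1/3 + a^2/9)*b + ((-5/3 - 13*a^2/9)/b)*b^2/2 + ((2 + 10*a^2/3)/b^2)*b^3/3
        + ((-2/3 - 2*a^2)/b^3)*b^4/4 + 0*b^5/5 + 0*b^6/6 := by
    have hG : ∀ x : ℝ, HasDerivAt (fun x => (x - a/3)^3/3 - (3 + a^2)/18 * x)
        ((x - a/3)^2 - (3 + a^2)/18) x := fun x => by
      have h := ((((hasDerivAt_id x).sub_const (a/3)).pow 3).div_const 3).sub
        ((hasDerivAt_id x).const_mul ((3 + a^2)/18))
      refine h.congr_deriv ?_
      push_cast; simp only [id_eq]; ring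
    exact comp_int a b hb (fun x => (x - a/3)^2 - (3 + a^2)/18)
      (fun x => (x - a/3)^3/3 - (3 + a^2)/18 * x) (by fun_prop) hG
      (1/3 + a^2/9) ((-5/3 - 13*a^2/9)/b) ((2 + 10*a^2/3)/b^2) ((-2/3 - 2*a^2)/b^3) 0 0
      (fun y => by field_simp; ring)
  have V2 : (∫ p in convexHull ℝ {((-1 : ℝ), (0 : ℝ)), (1, 0), (a, b)},
      (2 * (p.1 - a / 3))) =
      (-4*a/3)*b + ((16*a/3)/b)*b^2/2 + ((-4*a)/b^2)*b^3/3
        + 0*b^4/4 + 0*b^5/5 + 0*b^6/6 := by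
    have hG : ∀ x : ℝ, HasDerivAt (fun x => (x - a/3)^2) (2 * (x - a/3)) x := fun x => by
      have h := ((hasDerivAt_id x).sub_const (a/3)).pow 2
      refine h.congr_deriv ?_
      push_cast; simp only [id_eq]; ring
    exact comp_int a b hb (fun x => 2 * (x - a/3)) (fun x => (x - a/3)^2) (by fun_prop) hG
      (-4*a/3) ((16*a/3)/b) ((-4*a)/b^2) 0 0 0 (fun y => by field_simp; ring)
  have V3 : (∫ p in convexHull ℝ {((-1 : ℝ), (0 : ℝ)), (1, 0), (a, b)},
      ((2 * (p.1 - a / 3)) ^ 2 + (0:ℝ) ^ 2)) =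
      (8/3 + 8*a^2/9)*b + ((-8 - 56*a^2/9)/b)*b^2/2 + ((8 + 40*a^2/3)/b^2)*b^3/3
        + ((-8/3 - 8*a^2)/b^3)*b^4/4 + 0*b^5/5 + 0*b^6/6 := by
    have hG : ∀ x : ℝ, HasDerivAt (fun x => 4*(x - a/3)^3/3)
        ((2 * (x - a/3)) ^ 2 + (0:ℝ) ^ 2) x := fun x => by
      have h := ((((hasDerivAt_id x).sub_const (a/3)).pow 3).const_mul (4:ℝ)).div_const 3
      refine h.congr_deriv ?_
      push_cast; simp only [id_eq]; ring
    exact comp_int a b hb (fun x => (2 * (x - a/3)) ^ 2 + (0:ℝ) ^ 2)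
      (fun x => 4*(x - a/3)^3/3) (by fun_prop) hG
      (8/3 + 8*a^2/9) ((-8 - 56*a^2/9)/b) ((8 + 40*a^2/3)/b^2) ((-8/3 - 8*a^2)/b^3) 0 0
      (fun y => by field_simp; ring)
  have V4 : (∫ p in convexHull ℝ {((-1 : ℝ), (0 : ℝ)), (1, 0), (a, b)},
      ((p.1 - a / 3) ^ 2 - (3 + a ^ 2) / 18) ^ 2) =
      (7/30 + a^2/3 + a^4/162)*b + ((-25/18 - 89*a^2/27 - 25*a^4/162)/b)*b^2/2
        + ((10/3 + 12*a^2 + 34*a^4/27)/b^2)*b^3/3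
        + ((-34/9 - 532*a^2/27 - 34*a^4/9)/b^3)*b^4/4
        + ((2 + 44*a^2/3 + 14*a^4/3)/b^4)*b^5/5
        + ((-2/5 - 4*a^2 - 2*a^4)/b^5)*b^6/6 := by
    have hG : ∀ x : ℝ, HasDerivAt
        (fun x => (x - a/3)^5/5 - 2*((3 + a^2)/18)*(x - a/3)^3/3 + ((3 + a^2)/18)^2 * x)
        (((x - a/3) ^ 2 - (3 + a ^ 2) / 18) ^ 2) x := fun x => by
      have hx := (hasDerivAt_id x).sub_const (a/3)
      have h := (((hx.pow 5).div_const 5).sub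
        (((hx.pow 3).const_mul (2*((3 + a^2)/18))).div_const 3)).add
        ((hasDerivAt_id x).const_mul (((3 + a^2)/18)^2))
      refine h.congr_deriv ?_
      push_cast; simp only [id_eq]; ring
    exact comp_int a b hb (fun x => ((x - a/3) ^ 2 - (3 + a ^ 2) / 18) ^ 2)
      (fun x => (x - a/3)^5/5 - 2*((3 + a^2)/18)*(x - a/3)^3/3 + ((3 + a^2)/18)^2 * x)
      (by fun_prop) hG
      (7/30 + a^2/3 + a^4/162) ((-25/18 - 89*a^2/27 - 25*a^4/162)/b)
      ((10/3 + 12*a^2 + 34*a^4/27)/b^2) ((-34/9 - 532*a^2/27 - 34*a^4/9)/b^3)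
      ((2 + 44*a^2/3 + 14*a^4/3)/b^4) ((-2/5 - 4*a^2 - 2*a^4)/b^5)
      (fun y => by field_simp; ring)
  -- rewrite the integrands of the statement
  have e1 : (fun p : ℝ × ℝ => f₂ p.1 p.2)
      = fun p : ℝ × ℝ => (p.1 - a / 3) ^ 2 - (3 + a ^ 2) / 18 := by
    funext p; rw [hf₂]
  have e1sq : (fun p : ℝ × ℝ => f₂ p.1 p.2 ^ 2)
      = fun p : ℝ × ℝ => ((p.1 - a / 3) ^ 2 - (3 + a ^ 2) / 18) ^ 2 := by
    funext p; rw [hf₂]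
  have e2 : (fun p : ℝ × ℝ => deriv (fun t => f₁ t p.2) p.1 * deriv (fun t => f₂ t p.2) p.1
        + deriv (fun s => f₁ p.1 s) p.2 * deriv (fun s => f₂ p.1 s) p.2)
      = fun p : ℝ × ℝ => 2 * (p.1 - a / 3) := by
    funext p
    simp only [hf₁, hf₂]
    rw [dA p.1, dB p.1, deriv_const, deriv_const]
    ring
  have e3 : (fun p : ℝ × ℝ => (deriv (fun t => f₂ t p.2) p.1) ^ 2
        + (deriv (fun s => f₂ p.1 s) p.2) ^ 2)
      = fun p : ℝ × ℝ => (2 * (p.1 - a / 3)) ^ 2 + (0:ℝ) ^ 2 := by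
    funext p
    simp only [hf₂]
    rw [dB p.1, deriv_const]
  rw [e1, e1sq, e2, e3, V1, V2, V3, V4]
  refine ⟨by field_simp; ring, by field_simp; ring, by field_simp; ring, ?_⟩
  have hval : (7/30 + a^2/3 + a^4/162)*b + ((-25/18 - 89*a^2/27 - 25*a^4/162)/b)*b^2/2
        + ((10/3 + 12*a^2 + 34*a^4/27)/b^2)*b^3/3
        + ((-34/9 - 532*a^2/27 - 34*a^4/9)/b^3)*b^4/4
        + ((2 + 44*a^2/3 + 14*a^4/3)/b^4)*b^5/5
        + ((-2/5 - 4*a^2 - 2*a^4)/b^5)*b^6/6 = 7*b*(3 + a^2)^2/1620 := by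
    field_simp; ring
  rw [hval]
  positivity
end
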